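/- arXiv:1606.08944 — 14 statements merged into one kernel-verified Lean document; each statement's English description precedes it below -/
import Mathlib

section
/- Let n be a positive integer coprime to 6 and let S = (x1)(x2)(x3)(x4) be a minimal zero-sum sequence over Z/n with 1 ≤ xi < n. Then for every unit g of Z/n, the g-norm ||S||_g = (sum of least positive residues of g^{-1}·xi)/n equals 1, 2, or 3; moreover if ||S||_g = 3 for some generator g, then ||S||_{-g} = 1. Consequently ind(S) ∈ {1, 2}, and ind(S) = 2 if and only if ||S||_g = 2 for all generators g. -/
/-- `S = (x1)(x2)(x3)(x4)` is a minimal zero-sum sequence over `ℤ/n`: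
all entries lie in `[1, n)`, the total sum is `≡ 0 (mod n)`, and no proper
nonempty subsequence sums to `0 (mod n)`. -/
def IsMinZS4 (n x1 x2 x3 x4 : ℕ) : Prop :=
  (1 ≤ x1 ∧ x1 < n) ∧ (1 ≤ x2 ∧ x2 < n) ∧ (1 ≤ x3 ∧ x3 < n) ∧ (1 ≤ x4 ∧ x4 < n) ∧
  (x1 + x2 + x3 + x4) % n = 0 ∧
  (x1 + x2) % n ≠ 0 ∧ (x1 + x3) % n ≠ 0 ∧ (x1 + x4) % n ≠ 0 ∧
  (x2 + x3) % n ≠ 0 ∧ (x2 + x4) % n ≠ 0 ∧ (x3 + x4) % n ≠ 0 ∧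
  (x1 + x2 + x3) % n ≠ 0 ∧ (x1 + x2 + x4) % n ≠ 0 ∧
  (x1 + x3 + x4) % n ≠ 0 ∧ (x2 + x3 + x4) % n ≠ 0

/-- Sum of least nonnegative residues of the `g·xᵢ` mod `n`;
this equals `n·‖S‖_{g⁻¹}` for a unit `g` of `ℤ/n`. -/
def normSum (n g x1 x2 x3 x4 : ℕ) : ℕ :=
  (x1 * g) % n + (x2 * g) % n + (x3 * g) % n + (x4 * g) % n

/-- The index of `S`: the minimum of `‖S‖_g` over generators `g` of `ℤ/n`. -/
noncomputable def seqIndex (n x1 x2 x3 x4 : ℕ) : ℕ :=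
  sInf {m : ℕ | ∃ g, g < n ∧ Nat.Coprime g n ∧ normSum n g x1 x2 x3 x4 = m * n}

/-- `k` is good: `k` is a power of `2`, `k < n/6`, and
`F(k) = (2n − 2 − 2⌊((3k−1)/(3k))·n⌋)·k > (n−1)/2`. -/
def IsGood (n k : ℕ) : Prop :=
  (∃ l, k = 2 ^ l) ∧ 6 * k < n ∧
    (n - 1) / 2 < (2 * n - 2 - 2 * ((3 * k - 1) * n / (3 * k))) * k

lemma resid_pos (n g x : ℕ) (hn : 2 ≤ n) (hg : Nat.Coprime g n)
    (hx1 : 1 ≤ x) (hx2 : x < n) : 1 ≤ x * g % n ∧ x * g % n < n := by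
  refine ⟨?_, Nat.mod_lt _ (by omega)⟩
  rcases Nat.eq_zero_or_pos (x * g % n) with h | h
  · exfalso
    have hdvd : n ∣ x * g := Nat.dvd_of_mod_eq_zero h
    have : n ∣ x := (Nat.Coprime.dvd_of_dvd_mul_right hg.symm) hdvd
    have := Nat.le_of_dvd (by omega) this
    omega
  · exact h

lemma coprime_compl (n g : ℕ) (hn : 2 ≤ n) (hglt : g < n) (hg1 : 1 ≤ g)
    (hg : Nat.Coprime g n) : Nat.Coprime (n - g) n := by
  have e : n = g + (n - g) := by omega
  rw [Nat.coprime_comm] at hg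
  have h2' := (Nat.coprime_sub_self_left (m := g) (n := n) (by omega)).mpr hg
  unfold Nat.Coprime at h2' ⊢
  calc Nat.gcd (n - g) n = Nat.gcd (n - g) (g + (n - g)) := by rw [← e]
    _ = Nat.gcd (n - g) g := Nat.gcd_add_self_right _ _
    _ = 1 := h2'

lemma norm_cases (n g x1 x2 x3 x4 : ℕ) (hg : Nat.Coprime g n)
    (hS : IsMinZS4 n x1 x2 x3 x4) :
    normSum n g x1 x2 x3 x4 = n ∨ normSum n g x1 x2 x3 x4 = 2 * n ∨
      normSum n g x1 x2 x3 x4 = 3 * n := by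
  obtain ⟨h1, h2, h3, h4, hsum, -⟩ := hS
  have hn : 2 ≤ n := by omega
  have r1 := resid_pos n g x1 hn hg h1.1 h1.2
  have r2 := resid_pos n g x2 hn hg h2.1 h2.2
  have r3 := resid_pos n g x3 hn hg h3.1 h3.2
  have r4 := resid_pos n g x4 hn hg h4.1 h4.2
  have hmod : normSum n g x1 x2 x3 x4 % n = 0 := by
    have h0 : ((x1 + x2 + x3 + x4) * g) % n = 0 := by
      rw [Nat.mul_mod, hsum]; simp
    calc normSum n g x1 x2 x3 x4 % n
        = (x1 * g + x2 * g + x3 * g + x4 * g) % n := by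
          unfold normSum; simp [Nat.add_mod]
      _ = ((x1 + x2 + x3 + x4) * g) % n := by ring_nf
      _ = 0 := h0
  obtain ⟨c, hc⟩ := Nat.dvd_of_mod_eq_zero hmod
  have hub : normSum n g x1 x2 x3 x4 < 4 * n := by unfold normSum; omega
  have hlb : 0 < normSum n g x1 x2 x3 x4 := by unfold normSum; omega
  have hc4 : c < 4 := by
    by_contra hcon
    have hcle : 4 ≤ c := by omega
    have : n * 4 ≤ n * c := Nat.mul_le_mul (Nat.le_refl n) hcle
    omega
  have hc0 : 0 < c := by
    rcases Nat.eq_zero_or_pos c with h | h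
    · subst h; omega
    · exact h
  interval_cases c <;> omega

lemma comp_norm (n g x1 x2 x3 x4 : ℕ) (hgn : g < n) (hg1 : 1 ≤ g)
    (hg : Nat.Coprime g n) (hS : IsMinZS4 n x1 x2 x3 x4)
    (h3 : normSum n g x1 x2 x3 x4 = 3 * n) :
    normSum n (n - g) x1 x2 x3 x4 = n := by
  obtain ⟨h1, h2, h3', h4, hsum, -⟩ := hS
  have hn : 2 ≤ n := by omega
  have hg' : Nat.Coprime (n - g) n := coprime_compl n g hn hgn hg1 hg
  have key : ∀ x : ℕ, 1 ≤ x → x < n → x * (n - g) % n = n - x * g % n := by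
    intro x hx1 hx2
    have r := resid_pos n g x hn hg hx1 hx2
    have s := resid_pos n (n - g) x hn hg' hx1 hx2
    have hadd : (x * (n - g) % n + x * g % n) % n = 0 := by
      have h' : (x * (n - g) + x * g) % n = 0 := by
        have e : x * (n - g) + x * g = x * n := by
          have hle : g ≤ n := by omega
          obtain ⟨k, hk⟩ := Nat.le.dest hle
          subst hk
          have : (g + k) - g = k := by omega
          rw [this]; ring
        rw [e, Nat.mul_mod, Nat.mod_self, Nat.mul_zero, Nat.zero_mod]
      calc (x * (n - g) % n + x * g % n) % n
          = (x * (n - g) + x * g) % n := by simp [Nat.add_mod]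
        _ = 0 := h'
    have : x * (n - g) % n + x * g % n = n := by
      obtain ⟨c, hc⟩ := Nat.dvd_of_mod_eq_zero hadd
      have hc2 : c < 2 := by
        by_contra hcon
        have hcle : 2 ≤ c := by omega
        have : n * 2 ≤ n * c := Nat.mul_le_mul (Nat.le_refl n) hcle
        omega
      interval_cases c <;> omega
    omega
  have k1 := key x1 h1.1 h1.2
  have k2 := key x2 h2.1 h2.2
  have k3 := key x3 h3'.1 h3'.2
  have k4 := key x4 h4.1 h4.2
  have r1 := resid_pos n g x1 hn hg h1.1 h1.2
  have r2 := resid_pos n g x2 hn hg h2.1 h2.2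
  have r3 := resid_pos n g x3 hn hg h3'.1 h3'.2
  have r4 := resid_pos n g x4 hn hg h4.1 h4.2
  unfold normSum at h3 ⊢
  omega

theorem stmt_0 (n x1 x2 x3 x4 : ℕ) (hn : 0 < n) (h6 : Nat.Coprime n 6)
    (hS : IsMinZS4 n x1 x2 x3 x4) :
    (∀ g : ℕ, Nat.Coprime g n →
      normSum n g x1 x2 x3 x4 = n ∨ normSum n g x1 x2 x3 x4 = 2 * n ∨
        normSum n g x1 x2 x3 x4 = 3 * n) ∧
    (∀ g : ℕ, g < n → Nat.Coprime g n → normSum n g x1 x2 x3 x4 = 3 * n →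
      normSum n (n - g) x1 x2 x3 x4 = n) ∧
    (seqIndex n x1 x2 x3 x4 = 1 ∨ seqIndex n x1 x2 x3 x4 = 2) ∧
    (seqIndex n x1 x2 x3 x4 = 2 ↔
      ∀ g : ℕ, g < n → Nat.Coprime g n → normSum n g x1 x2 x3 x4 = 2 * n) :=  by
  have hcopy := hS
  obtain ⟨h1, h2, h3, h4, hsum, -⟩ := hcopy
  have hn2 : 2 ≤ n := by omega
  set T := {m : ℕ | ∃ g, g < n ∧ Nat.Coprime g n ∧ normSum n g x1 x2 x3 x4 = m * n} with hT
  have hpos : ∀ g, Nat.Coprime g n → 0 < normSum n g x1 x2 x3 x4 := by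
    intro g hg
    have r1 := resid_pos n g x1 hn2 hg h1.1 h1.2
    unfold normSum; omega
  have hgpos : ∀ g : ℕ, g < n → Nat.Coprime g n → 1 ≤ g := by
    intro g hglt hg
    rcases Nat.eq_zero_or_pos g with h | h
    · subst h; simp [Nat.Coprime] at hg; omega
    · exact h
  have h0T : 0 ∉ T := by
    rintro ⟨g, hglt, hg, heq⟩
    have := hpos g hg
    omega
  have hmemT : ∀ g : ℕ, g < n → Nat.Coprime g n →
      (1 ∈ T ∨ normSum n g x1 x2 x3 x4 = 2 * n) := by
    intro g hglt hg
    rcases norm_cases n g x1 x2 x3 x4 hg hS with h | h | h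
    · left; exact ⟨g, hglt, hg, by omega⟩
    · right; exact h
    · left
      have hg1 : 1 ≤ g := hgpos g hglt hg
      have hc := comp_norm n g x1 x2 x3 x4 hglt hg1 hg hS h
      exact ⟨n - g, by omega, coprime_compl n g hn2 hglt hg1 hg, by omega⟩
  have hone : Nat.Coprime 1 n := Nat.coprime_one_left n
  have h1lt : (1 : ℕ) < n := hn2
  have h2T : 1 ∈ T ∨ 2 ∈ T := by
    rcases hmemT 1 h1lt hone with h | h
    · left; exact h
    · right; exact ⟨1, h1lt, hone, by omega⟩
  have hTne : T.Nonempty := by rcases h2T with h | h <;> exact ⟨_, h⟩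
  have hInfmem := Nat.sInf_mem hTne
  have hInf_ne0 : sInf T ≠ 0 := fun h => h0T (h ▸ hInfmem)
  have hidx : seqIndex n x1 x2 x3 x4 = sInf T := rfl
  refine ⟨fun g hg => norm_cases n g x1 x2 x3 x4 hg hS,
    fun g hglt hg h3n => comp_norm n g x1 x2 x3 x4 hglt (hgpos g hglt hg) hg hS h3n,
    ?_, ?_⟩
  · rw [hidx]
    rcases h2T with h | h
    · have := Nat.sInf_le h; omega
    · have := Nat.sInf_le h; omega
  · constructor
    · intro hidx2 g hglt hg
      rw [hidx] at hidx2
      rcases norm_cases n g x1 x2 x3 x4 hg hS with h | h | h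
      · exfalso
        have := Nat.sInf_le (show 1 ∈ T from ⟨g, hglt, hg, by omega⟩)
        omega
      · exact h
      · exfalso
        have hg1 : 1 ≤ g := hgpos g hglt hg
        have hc := comp_norm n g x1 x2 x3 x4 hglt hg1 hg hS h
        have := Nat.sInf_le (show 1 ∈ T from
          ⟨n - g, by omega, coprime_compl n g hn2 hglt hg1 hg, by omega⟩)
        omega
    · intro hall
      have h2T' : 2 ∈ T := ⟨1, h1lt, hone, by have := hall 1 h1lt hone; omega⟩
      have h1T' : 1 ∉ T := by
        rintro ⟨g, hglt, hg, heq⟩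
        have := hall g hglt hg
        omega
      rw [hidx]
      have hle := Nat.sInf_le h2T'
      have hne1 : sInf T ≠ 1 := fun h => h1T' (h ▸ hInfmem)
      omega
end

section
/- Let S = (x1)(x2)(x3)(x4) be a minimal zero-sum sequence over Z/n (with gcd(n,6)=1, 1 ≤ xi < n) of index 2. Then for every unit g of Z/n, exactly two indices i ∈ {1,2,3,4} satisfy (xi·g mod n) > n/2. -/
theorem stmt_2 (n x1 x2 x3 x4 : ℕ) (hn : 0 < n) (h6 : Nat.Coprime n 6)
    (hS : IsMinZS4 n x1 x2 x3 x4)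
    (hInd2 : ∀ g : ℕ, Nat.Coprime g n → normSum n g x1 x2 x3 x4 = 2 * n) :
    ∀ g : ℕ, Nat.Coprime g n →
      (Finset.univ.filter
        (fun i : Fin 4 => n < 2 * ((![x1, x2, x3, x4] i * g) % n))).card = 2 := by
  intro g hg
  obtain ⟨⟨h11, h12⟩, ⟨h21, h22⟩, ⟨h31, h32⟩, ⟨h41, h42⟩, -⟩ := hS
  have hn2 : 2 ≤ n := by omega
  set r1 := (x1 * g) % n with hr1
  set r2 := (x2 * g) % n with hr2
  set r3 := (x3 * g) % n with hr3
  set r4 := (x4 * g) % n with hr4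
  have hlt1 : r1 < n := Nat.mod_lt _ hn
  have hlt2 : r2 < n := Nat.mod_lt _ hn
  have hlt3 : r3 < n := Nat.mod_lt _ hn
  have hlt4 : r4 < n := Nat.mod_lt _ hn
  have hng : Nat.Coprime n g := hg.symm
  have hp : ∀ x, 1 ≤ x → x < n → 0 < (x * g) % n := by
    intro x hx1 hx2
    rcases Nat.eq_zero_or_pos ((x * g) % n) with h | h
    swap
    · exact h
    · exfalso
      have hd : n ∣ x * g := Nat.dvd_of_mod_eq_zero h
      have : n ∣ x := hng.dvd_of_dvd_mul_right hd
      have := Nat.le_of_dvd (by omega) this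
      omega
  have hp1 : 0 < r1 := hp x1 h11 h12
  have hp2 : 0 < r2 := hp x2 h21 h22
  have hp3 : 0 < r3 := hp x3 h31 h32
  have hp4 : 0 < r4 := hp x4 h41 h42
  have hsum : r1 + r2 + r3 + r4 = 2 * n := hInd2 g hg
  have hco2 : Nat.Coprime 2 n := (Nat.Coprime.coprime_dvd_right (by norm_num) h6).symm
  have key : (2 * r1) % n + (2 * r2) % n + (2 * r3) % n + (2 * r4) % n = 2 * n := by
    have h2 := hInd2 (2 * g) (Nat.Coprime.mul hco2 hg)
    unfold normSum at h2
    have e : ∀ x : ℕ, (x * (2 * g)) % n = (2 * ((x * g) % n)) % n := by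
      intro x
      rw [show x * (2 * g) = 2 * (x * g) by ring]
      conv_lhs => rw [Nat.mul_mod]
      conv_rhs => rw [Nat.mul_mod, Nat.mod_mod_of_dvd _ dvd_rfl]
    rw [e x1, e x2, e x3, e x4] at h2
    exact h2
  have hodd : n % 2 = 1 := by
    rcases Nat.mod_two_eq_zero_or_one n with h | h
    · exact absurd (hco2.eq_one_of_dvd (Nat.dvd_of_mod_eq_zero h)) (by norm_num)
    · exact h
  have m : ∀ r : ℕ, 0 < r → r < n → (2 * r) % n = if n < 2 * r then 2 * r - n else 2 * r := by
    intro r h0 h1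
    split_ifs with h
    · rw [Nat.mod_eq_sub_mod (show n ≤ 2 * r by omega),
        Nat.mod_eq_of_lt (show 2 * r - n < n by omega)]
    · exact Nat.mod_eq_of_lt (by omega)
  rw [m r1 hp1 hlt1, m r2 hp2 hlt2, m r3 hp3 hlt3, m r4 hp4 hlt4] at key
  rw [Finset.card_filter, Fin.sum_univ_four]
  simp only [Matrix.cons_val_zero, Matrix.cons_val_one, Matrix.head_cons,
    Matrix.cons_val_two, Matrix.tail_cons, Matrix.cons_val_three, ← hr1, ← hr2, ← hr3, ← hr4]
  split_ifs at key ⊢ <;> omega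
end

section
/- Let S = (1)(x2)(x3)(x4) be a minimal zero-sum sequence over Z/n with gcd(n,6)=1, gcd(xi,n)=1 for all i, x3 = x2+1, and ind(S) = 2. Then x4 < x2 (indeed x2 ≥ (n+1)/2 and x4 < n/2). -/
theorem stmt_4 (n x2 x3 x4 : ℕ) (hn : 0 < n) (h6 : Nat.Coprime n 6)
    (hS : IsMinZS4 n 1 x2 x3 x4)
    (hc2 : Nat.Coprime x2 n) (hc3 : Nat.Coprime x3 n) (hc4 : Nat.Coprime x4 n)
    (h3 : x3 = x2 + 1)
    (hInd2 : ∀ g : ℕ, Nat.Coprime g n →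
      (Finset.univ.filter
        (fun i : Fin 4 => n < 2 * ((![1, x2, x3, x4] i * g) % n))).card = 2) :
    x4 < x2 ∧ n + 1 ≤ 2 * x2 ∧ 2 * x4 < n := by
  obtain ⟨⟨-, -⟩, ⟨hx2a, hx2b⟩, ⟨hx3a, hx3b⟩, ⟨hx4a, hx4b⟩, hsum, h12, h13, h14,
    h23, h24, h34, h123, h124, h134, h234⟩ := hS
  have hn2 : 2 ≤ n := by omega
  have hodd : ¬ (2 ∣ n) := by
    intro hd
    have h2 : Nat.Coprime n 2 := Nat.Coprime.coprime_dvd_right (by norm_num) h6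
    have := Nat.dvd_gcd hd (dvd_refl 2)
    rw [Nat.Coprime] at h2
    omega
  have hg := hInd2 1 (Nat.coprime_one_left n)
  rw [Finset.card_filter, Fin.sum_univ_four] at hg
  simp only [Matrix.cons_val_zero, Matrix.cons_val_one, Matrix.head_cons,
    Matrix.cons_val_two, Matrix.tail_cons, Matrix.cons_val_three, mul_one] at hg
  rw [Nat.mod_eq_of_lt hx2b, Nat.mod_eq_of_lt hx3b, Nat.mod_eq_of_lt hx4b,
    Nat.mod_eq_of_lt (by omega : 1 < n)] at hg
  -- case split on whether 2*x2 > n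
  by_cases hA : n < 2 * x2
  · have hx3big : n < 2 * x3 := by omega
    have hx4small : ¬ (n < 2 * x4) := by
      by_contra h
      simp only [if_pos hA, if_pos hx3big, if_pos h,
        if_neg (by omega : ¬ n < 2 * 1)] at hg
      omega
    refine ⟨by omega, by omega, by omega⟩
  · -- then 2*x3 > n and 2*x4 > n must both hold, forcing 2*x2 = n - 1
    have hx3big : n < 2 * x3 ∧ n < 2 * x4 := by
      by_contra h
      rcases Decidable.not_and_iff_or_not.mp h with h' | h' <;>
        · simp only [if_neg hA, if_neg (by omega : ¬ n < 2 * 1)] at hg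
          split_ifs at hg <;> omega
    have h2x2 : 2 * x2 = n - 1 := by omega
    exfalso
    have hrw : 1 + x2 + x3 + x4 = n + (1 + x4) := by omega
    rw [hrw, Nat.add_mod_left] at hsum
    exact h14 hsum
end

section
/- Let n be a positive integer with gcd(n,6)=1. If k ≥ 2 is a 'good' integer (i.e., k is a power of 2, k < n/6, and F(k) := (2n − 2 − 2·⌊((3k−1)/(3k))·n⌋)·k > (n−1)/2), then k/2 is also good. -/
lemma key_div (n d : ℕ) (hd : 0 < d) (hr : n % d ≠ 0) :
    (d - 1) * n / d = n - 1 - n / d := by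
  have hq := Nat.div_add_mod n d
  have hrd := Nat.mod_lt n hd
  have hr1 : 1 ≤ n % d := Nat.one_le_iff_ne_zero.mpr hr
  have hmul : n / d ≤ d * (n / d) := Nat.le_mul_of_pos_left _ hd
  have hqn : n / d ≤ n - 1 := by omega
  have hn1 : 1 ≤ n := by omega
  apply Nat.div_eq_of_lt_le
  · zify [hqn, hn1, hd]
    nlinarith [hq, hrd, hr1]
  · zify [hqn, hn1, hd]
    nlinarith [hq, hrd, hr1]

lemma F_eq (n k : ℕ) (hk : 0 < k) (h3 : ¬ (3 ∣ n)) :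
    (2 * n - 2 - 2 * ((3 * k - 1) * n / (3 * k))) * k = 2 * (n / (3 * k)) * k := by
  have hd : 0 < 3 * k := by omega
  have hr : n % (3 * k) ≠ 0 := by
    intro h
    exact h3 (dvd_trans ⟨k, rfl⟩ (Nat.dvd_of_mod_eq_zero h))
  rw [key_div n (3 * k) hd hr]
  have hmul : n / (3 * k) ≤ 3 * k * (n / (3 * k)) := Nat.le_mul_of_pos_left _ hd
  have hq := Nat.div_add_mod n (3 * k)
  have : n / (3 * k) ≤ n - 1 := by omega
  congr 1
  omega



theorem stmt_5 (n k : ℕ) (hn : 0 < n) (h6 : Nat.Coprime n 6)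
    (hk : 2 ≤ k) (hgood : IsGood n k) : IsGood n (k / 2) := by
  obtain ⟨⟨l, hl⟩, hkn, hF⟩ := hgood
  have h3 : ¬ (3 ∣ n) := fun h => by
    have := Nat.Coprime.eq_one_of_dvd (h6.symm.coprime_dvd_left (by norm_num : (3:ℕ) ∣ 6)) h
    omega
  have hl1 : 1 ≤ l := by
    rcases Nat.eq_zero_or_pos l with h | h
    · simp [h] at hl; omega
    · exact h
  have hk2 : k / 2 * 2 = k := by
    rw [hl]
    have : (2:ℕ) ^ l = 2 ^ (l - 1) * 2 := by
      rw [← pow_succ]; congr 1; omega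
    rw [this, Nat.mul_div_cancel]; omega
  set m := k / 2 with hm
  have hm1 : 1 ≤ m := by omega
  refine ⟨⟨l - 1, ?_⟩, by omega, ?_⟩
  · have : (2:ℕ) ^ l = 2 ^ (l - 1) * 2 := by rw [← pow_succ]; congr 1; omega
    rw [hm, hl, this, Nat.mul_div_cancel]; omega
  · rw [F_eq n m (by omega) h3]
    rw [F_eq n k (by omega) h3] at hF
    have hdd : n / (3 * k) = n / (3 * m) / 2 := by
      rw [Nat.div_div_eq_div_mul]
      congr 1
      omega
    have h2 : 2 * (n / (3 * m) / 2) ≤ n / (3 * m) := by omega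
    calc (n - 1) / 2 < 2 * (n / (3 * k)) * k := hF
      _ = 2 * (n / (3 * m) / 2) * (2 * m) := by rw [hdd]; congr 1; omega
      _ ≤ n / (3 * m) * (2 * m) := by
          exact Nat.mul_le_mul_right _ h2
      _ = 2 * (n / (3 * m)) * m := by ring
end

section
/- Let n be coprime to 6 and set f(k) = ⌊((3k−1)/(3k))·n⌋. Let S = (1)(x2)(x3)(x4) be a minimal zero-sum sequence over Z/n with x3 = x2+1, gcd(xi,n)=1 for all i, and ind(S) = 2. If k is good and x2 ≥ f(k), then x2 ≥ f(2k). -/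
lemma mod_of_add (n a d q : ℕ) (h : a + d = q * n) (hd : 0 < d) (hdn : d ≤ n) :
    a % n = n - d := by
  have hn0 : 0 < n := lt_of_lt_of_le hd hdn
  have h1 : a + d ≡ (n - d) + d [MOD n] := by
    show (a + d) % n = ((n - d) + d) % n
    rw [h, Nat.sub_add_cancel hdn, Nat.mul_mod_left, Nat.mod_self]
  have h2 : a ≡ (n - d) [MOD n] := Nat.ModEq.add_right_cancel' d h1
  have := h2
  unfold Nat.ModEq at this
  rw [this, Nat.mod_eq_of_lt (by omega)]

lemma div_formula (m n : ℕ) (hm : 2 ≤ m) (hnd : ¬ m ∣ n) :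
    (m - 1) * n / m = n - n / m - 1 := by
  have hn0 : 0 < n := by
    rcases Nat.eq_zero_or_pos n with h | h
    · exact absurd (h ▸ dvd_zero m) hnd
    · exact h
  have hq : n / m < n := Nat.div_lt_self hn0 (by omega)
  have hs0 : 0 < n % m := Nat.pos_of_ne_zero fun h => hnd (Nat.dvd_of_mod_eq_zero h)
  have hsm : n % m < m := Nat.mod_lt _ (by omega)
  have hdm : m * (n / m) + n % m = n := Nat.div_add_mod n m
  obtain ⟨q, hqd⟩ : ∃ q, n / m = q := ⟨_, rfl⟩
  obtain ⟨s, hsd⟩ : ∃ s, n % m = s := ⟨_, rfl⟩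
  rw [hqd] at hq hdm ⊢
  rw [hsd] at hs0 hsm hdm
  have key : (m - 1) * n = (m - s) + (n - q - 1) * m := by
    have h1 : q ≤ n := le_of_lt hq
    have h2 : 1 ≤ n - q := by omega
    have hdm' : (m : ℤ) * q + s = n := by exact_mod_cast hdm
    zify [show 1 ≤ m by omega, le_of_lt hsm, h1, h2]
    linear_combination hdm'
  rw [key, Nat.add_mul_div_right _ _ (show 0 < m by omega),
    Nat.div_eq_of_lt (by omega), Nat.zero_add]

theorem stmt_6 (n x2 x3 x4 k : ℕ) (hn : 0 < n) (h6 : Nat.Coprime n 6)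
    (hS : IsMinZS4 n 1 x2 x3 x4) (h3 : x3 = x2 + 1)
    (hc2 : Nat.Coprime x2 n) (hc3 : Nat.Coprime x3 n) (hc4 : Nat.Coprime x4 n)
    (hInd2 : ∀ g : ℕ, Nat.Coprime g n → normSum n g 1 x2 x3 x4 = 2 * n)
    (hgood : IsGood n k) (hx2 : (3 * k - 1) * n / (3 * k) ≤ x2) :
    (3 * (2 * k) - 1) * n / (3 * (2 * k)) ≤ x2 := by
  obtain ⟨⟨l, hkl⟩, h6k, hF⟩ := hgood
  obtain ⟨-, ⟨hx2a, hx2b⟩, ⟨hx3a, hx3b⟩, ⟨hx4a, hx4b⟩, -⟩ := hS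
  have hk1 : 1 ≤ k := hkl ▸ Nat.one_le_two_pow
  have hn7 : 7 ≤ n := by omega
  -- coprimality facts
  have hcop2 : Nat.Coprime 2 n := (h6.coprime_dvd_right (by norm_num : (2:ℕ) ∣ 6)).symm
  have hcop3 : Nat.Coprime 3 n := (h6.coprime_dvd_right (by norm_num : (3:ℕ) ∣ 6)).symm
  have hcopk : Nat.Coprime k n := by rw [hkl]; exact Nat.Coprime.pow_left l hcop2
  have hc3k : Nat.Coprime (3 * k) n := Nat.Coprime.mul hcop3 hcopk
  have hc2k : Nat.Coprime (2 * k) n := Nat.Coprime.mul hcop2 hcopk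
  have h2n : ¬ (2 : ℕ) ∣ n := fun hd => by
    have := Nat.Coprime.eq_one_of_dvd hcop2 hd; norm_num at this
  have h3n : ¬ (3 : ℕ) ∣ n := fun hd => by
    have := Nat.Coprime.eq_one_of_dvd hcop3 hd; norm_num at this
  have hodd : n % 2 = 1 := by omega
  -- x4 = 2r where r = n - 1 - x2
  have h1 := hInd2 1 (Nat.coprime_one_left n)
  unfold normSum at h1
  rw [mul_one, mul_one, mul_one, mul_one, Nat.mod_eq_of_lt (show 1 < n by omega),
    Nat.mod_eq_of_lt hx2b, Nat.mod_eq_of_lt hx3b, Nat.mod_eq_of_lt hx4b] at h1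
  set r := n - 1 - x2 with hrdef
  have hrx : x2 + (r + 1) = n := by omega
  have hr1 : 1 ≤ r := by omega
  have hx4 : x4 = 2 * r := by omega
  obtain ⟨A, hA⟩ : ∃ A, k * r = A := ⟨_, rfl⟩
  have hApos : 0 < A := hA ▸ Nat.mul_pos (by omega) (by omega)
  -- translate hx2 into 3*A ≤ n - 1
  have hdf3 : (3 * k - 1) * n / (3 * k) = n - n / (3 * k) - 1 :=
    div_formula (3 * k) n (by omega) (fun hd => h3n (dvd_trans ⟨k, rfl⟩ hd))
  rw [hdf3] at hx2 hF
  have hrq3 : r ≤ n / (3 * k) := by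
    have hq3 : n / (3 * k) < n := Nat.div_lt_self (by omega) (by omega)
    omega
  have h3kr_le : 3 * A ≤ n - 1 := by
    have h1' : 3 * k * r ≤ n := by
      calc 3 * k * r ≤ 3 * k * (n / (3 * k)) := Nat.mul_le_mul_left _ hrq3
        _ = n / (3 * k) * (3 * k) := by ring
        _ ≤ n := Nat.div_mul_le_self n (3 * k)
    have hne : 3 * k * r ≠ n := fun he => h3n ⟨k * r, by rw [← he]; ring⟩
    have : 3 * k * r = 3 * A := by rw [← hA]; ring
    omega
  rcases Nat.lt_or_ge (3 * A + 3 * k) (n + 1) with hcase | hcase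
  · -- Case A : 3k(r+1) ≤ n, use g = 3k
    have hg := hInd2 (3 * k) hc3k
    unfold normSum at hg
    have e1 : 1 * (3 * k) % n = 3 * k := by
      rw [one_mul]; exact Nat.mod_eq_of_lt (by omega)
    have e2 : x2 * (3 * k) % n = n - (3 * A + 3 * k) := by
      apply mod_of_add n _ _ (3 * k) _ (by omega) (by omega)
      calc x2 * (3 * k) + (3 * A + 3 * k) = x2 * (3 * k) + (3 * (k * r) + 3 * k) := by
            rw [hA]
        _ = (x2 + (r + 1)) * (3 * k) := by ring
        _ = n * (3 * k) := by rw [hrx]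
        _ = 3 * k * n := by ring
    have e3 : x3 * (3 * k) % n = n - 3 * A := by
      apply mod_of_add n _ _ (3 * k) _ (by omega) (by omega)
      calc x3 * (3 * k) + 3 * A = x3 * (3 * k) + 3 * (k * r) := by rw [hA]
        _ = (x3 + r) * (3 * k) := by ring
        _ = n * (3 * k) := by rw [show x3 + r = n by omega]
        _ = 3 * k * n := by ring
    have e4 : x4 * (3 * k) = 6 * A := by rw [hx4, ← hA]; ring
    rw [e1, e2, e3, e4] at hg
    have htle : 6 * A % n ≤ 6 * A := Nat.mod_le _ _
    have htlt : 6 * A % n < n := Nat.mod_lt _ (by omega)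
    generalize hgen : 6 * A % n = t at hg htle htlt
    have h6A : 6 * A < n := by omega
    -- conclude
    have hgoal : r ≤ n / (6 * k) := by
      rw [Nat.le_div_iff_mul_le (by omega : 0 < 6 * k)]
      have : r * (6 * k) = 6 * A := by rw [← hA]; ring
      omega
    have hdf6 : (3 * (2 * k) - 1) * n / (3 * (2 * k)) = n - n / (6 * k) - 1 := by
      rw [show 3 * (2 * k) = 6 * k by ring]
      exact div_formula (6 * k) n (by omega) (fun hd => h2n (dvd_trans ⟨3 * k, by ring⟩ hd))
    rw [hdf6]
    omega
  · -- Case B : 3k(r+1) > n, so n / (3k) = r; contradiction via goodness and g = 2k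
    exfalso
    have hq3eq : n / (3 * k) = r := by
      apply Nat.div_eq_of_lt_le
      · have : r * (3 * k) = 3 * A := by rw [← hA]; ring
        omega
      · have : (r + 1) * (3 * k) = 3 * A + 3 * k := by rw [← hA]; ring
        omega
    rw [hq3eq] at hF
    rw [show 2 * n - 2 - 2 * (n - r - 1) = 2 * r by omega] at hF
    have hF' : (n - 1) / 2 < 2 * A := by
      have : 2 * r * k = 2 * A := by rw [← hA]; ring
      omega
    have h4A : n + 1 ≤ 4 * A := by omega
    have hg := hInd2 (2 * k) hc2k
    unfold normSum at hg
    have e1 : 1 * (2 * k) % n = 2 * k := by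
      rw [one_mul]; exact Nat.mod_eq_of_lt (by omega)
    have e2 : x2 * (2 * k) % n = n - (2 * A + 2 * k) := by
      apply mod_of_add n _ _ (2 * k) _ (by omega) (by omega)
      calc x2 * (2 * k) + (2 * A + 2 * k) = x2 * (2 * k) + (2 * (k * r) + 2 * k) := by
            rw [hA]
        _ = (x2 + (r + 1)) * (2 * k) := by ring
        _ = n * (2 * k) := by rw [hrx]
        _ = 2 * k * n := by ring
    have e3 : x3 * (2 * k) % n = n - 2 * A := by
      apply mod_of_add n _ _ (2 * k) _ (by omega) (by omega)
      calc x3 * (2 * k) + 2 * A = x3 * (2 * k) + 2 * (k * r) := by rw [hA]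
        _ = (x3 + r) * (2 * k) := by ring
        _ = n * (2 * k) := by rw [show x3 + r = n by omega]
        _ = 2 * k * n := by ring
    have e4 : x4 * (2 * k) % n = 4 * A - n := by
      rw [show x4 * (2 * k) = 4 * A by rw [hx4, ← hA]; ring,
        Nat.mod_eq_sub_mod (by omega), Nat.mod_eq_of_lt (by omega)]
    rw [e1, e2, e3, e4] at hg
    omega
end

section
/- Let n be coprime to 6, f(k) = ⌊((3k−1)/(3k))·n⌋, and suppose x2 = f(k) for a good integer k, with x1 = 1, x3 = x2+1, x4 = 2n−2−2x2, all coprime to n. Then exactly three of the four values (xi·k mod n), i = 1,...,4, exceed n/2; hence S = (x1)(x2)(x3)(x4) cannot have index 2. -/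
lemma helper_mod (n c s : ℕ) (hc : 1 ≤ c) (h0 : 0 < s) (h1 : s < n) :
    (n * c - s) % n = n - s := by
  obtain ⟨d, rfl⟩ : ∃ d, c = d + 1 := ⟨c - 1, by omega⟩
  have h3 : n * (d + 1) = n * d + n := Nat.mul_succ n d
  have h2 : n * (d + 1) - s = (n - s) + n * d := by
    set A := n * d with hA
    rw [h3]; omega
  rw [h2, Nat.add_mul_mod_self_left, Nat.mod_eq_of_lt (by omega)]

theorem stmt_7 (n k x2 : ℕ) (hn : 0 < n) (h6 : Nat.Coprime n 6)
    (hgood : IsGood n k) (hx2 : x2 = (3 * k - 1) * n / (3 * k))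
    (hc2 : Nat.Coprime x2 n) (hc3 : Nat.Coprime (x2 + 1) n)
    (hc4 : Nat.Coprime (2 * n - 2 - 2 * x2) n) :
    (Finset.univ.filter
      (fun i : Fin 4 =>
        n < 2 * ((![1, x2, x2 + 1, 2 * n - 2 - 2 * x2] i * k) % n))).card = 3 ∧
    ¬ (∀ g : ℕ, Nat.Coprime g n →
      (Finset.univ.filter
        (fun i : Fin 4 =>
          n < 2 * ((![1, x2, x2 + 1, 2 * n - 2 - 2 * x2] i * g) % n))).card = 2) := by
  obtain ⟨⟨l, hl⟩, h6k, hF⟩ := hgood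
  have hk1 : 1 ≤ k := by rw [hl]; exact Nat.one_le_two_pow
  -- parity facts
  have hn2 : n % 2 = 1 := by
    by_contra h
    have h2 : (2 : ℕ) ∣ n := by omega
    have := Nat.dvd_gcd h2 (by norm_num : (2:ℕ) ∣ 6)
    rw [Nat.Coprime] at h6; rw [h6] at this; omega
  have hn3 : ¬ (3 : ℕ) ∣ n := by
    intro h3
    have := Nat.dvd_gcd h3 (by norm_num : (3:ℕ) ∣ 6)
    rw [Nat.Coprime] at h6; rw [h6] at this; omega
  set q := n / (3 * k) with hqdef
  set r := n % (3 * k) with hrdef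
  have h3k : 0 < 3 * k := by omega
  have hnr0 : 3 * k * q + r = n := Nat.div_add_mod n (3 * k)
  have hr3 : r < 3 * k := Nat.mod_lt n h3k
  have hr1 : 1 ≤ r := by
    rcases Nat.eq_zero_or_pos r with h | h
    · exfalso
      have : (3 * k) ∣ n := by
        refine Nat.dvd_of_mod_eq_zero ?_; omega
      exact hn3 (dvd_trans ⟨k, rfl⟩ this)
    · exact h
  set t := q * k with htdef
  have hnr : 3 * t + r = n := by
    rw [htdef]
    have : 3 * k * q = 3 * (q * k) := by ring
    omega
  have hA : (q + 1) * k = t + k := by rw [htdef]; ring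
  -- x2 = n - q - 1
  have hqn : q + 1 < n := by
    have : 3 * t + r = n := hnr
    have hq3 : 3 * q ≤ 3 * t := by
      rw [htdef]; exact Nat.mul_le_mul_left 3 (Nat.le_mul_of_pos_right q hk1)
    omega
  have hnr' : (3:ℤ) * k * q + r = n := by exact_mod_cast hnr0
  have hr3' : (r:ℤ) < 3 * k := by exact_mod_cast hr3
  have hr1' : (1:ℤ) ≤ r := by exact_mod_cast hr1
  have hq1 : x2 = n - (q + 1) := by
    rw [hx2]
    apply Nat.div_eq_of_lt_le
    · zify [show q + 1 ≤ n by omega, show (1:ℕ) ≤ 3 * k by omega]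
      nlinarith [hnr', hr3']
    · zify [show q + 1 ≤ n by omega, show (1:ℕ) ≤ 3 * k by omega]
      nlinarith [hnr', hr1']
  -- key bounds
  have hb1 : 2 * (t + k) < n := by omega
  have hb2 : 0 < t := by omega
  have hx4 : 2 * n - 2 - 2 * x2 = 2 * q := by omega
  -- goodness bound
  have hF' : n < 4 * t := by
    rw [← hx2, hx4] at hF
    have : 2 * q * k = 2 * t := by rw [htdef]; ring
    rw [this] at hF
    omega
  -- the four residues
  have e1 : (1 * k) % n = k := by
    rw [one_mul]; exact Nat.mod_eq_of_lt (by omega)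
  have e2 : (x2 * k) % n = n - (t + k) := by
    have hh : x2 * k = n * k - (t + k) := by
      rw [hq1, Nat.sub_mul, hA]
    rw [hh]
    exact helper_mod n k (t + k) hk1 (by omega) (by omega)
  have e3 : ((x2 + 1) * k) % n = n - t := by
    have hh : (x2 + 1) * k = n * k - t := by
      rw [show x2 + 1 = n - q by omega, Nat.sub_mul, ← htdef]
    rw [hh]
    exact helper_mod n k t hk1 (by omega) (by omega)
  have e4 : ((2 * n - 2 - 2 * x2) * k) % n = 2 * t := by
    rw [hx4, show 2 * q * k = 2 * t by rw [htdef]; ring]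
    exact Nat.mod_eq_of_lt (by omega)
  have hcard : (Finset.univ.filter
      (fun i : Fin 4 =>
        n < 2 * ((![1, x2, x2 + 1, 2 * n - 2 - 2 * x2] i * k) % n))).card = 3 := by
    rw [Finset.card_filter, Fin.sum_univ_four]
    simp only [Matrix.cons_val_zero, Matrix.cons_val_one, Matrix.head_cons,
      Matrix.cons_val_two, Matrix.tail_cons, Matrix.cons_val_three]
    simp only [e1, e2, e3, e4]
    rw [if_neg (by omega), if_pos (by omega), if_pos (by omega), if_pos (by omega)]
  refine ⟨hcard, ?_⟩
  intro h
  have hkc : Nat.Coprime k n := by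
    rw [hl]
    exact Nat.Coprime.pow_left l (Nat.prime_two.coprime_iff_not_dvd.mpr (by omega))
  have := h k hkc
  rw [hcard] at this
  omega
end

section
/- Let n be coprime to 6 and let S = (1)(x2)(x2+1)(x4) be a minimal zero-sum sequence over Z/n with ind(S) = 2 and gcd(xi,n)=1 for all i. If k is good then x2 ≥ ⌊((6k−1)/(6k))·n⌋. -/
/-- If `n ∣ u + v` and `u % n ≠ 0`, then the residues of `u` and `v` sum to `n`. -/
lemma aux_mod_add (n u v : ℕ) (hn : 0 < n) (h : (u + v) % n = 0) (hu : u % n ≠ 0) :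
    u % n + v % n = n := by
  have h1 : u % n < n := Nat.mod_lt _ hn
  have h2 : v % n < n := Nat.mod_lt _ hn
  have h3 : (u % n + v % n) % n = 0 := by rw [← Nat.add_mod]; exact h
  obtain ⟨c, hc⟩ := Nat.dvd_of_mod_eq_zero h3
  rcases c with _ | _ | c
  · simp at hc; omega
  · omega
  · have : n * (c + 1 + 1) = n * c + n + n := by ring
    omega

/-- The key identity coming from `ind(S) = 2`. -/
lemma aux_star (n x2 x4 d : ℕ) (hn2 : 2 ≤ n)
    (hd : x2 + d + 1 = n) (hx4 : x4 = 2 * d)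
    (hc2 : Nat.Coprime x2 n) (hc3 : Nat.Coprime (x2 + 1) n)
    (hInd2 : ∀ g : ℕ, Nat.Coprime g n → normSum n g 1 x2 (x2 + 1) x4 = 2 * n)
    (g : ℕ) (hg : Nat.Coprime g n) :
    g % n + (2 * d * g) % n = ((d + 1) * g) % n + (d * g) % n := by
  have hn : 0 < n := by omega
  have key := hInd2 g hg
  unfold normSum at key
  rw [one_mul] at key
  have e1 : x2 * g % n + ((d + 1) * g) % n = n := by
    apply aux_mod_add n _ _ hn
    · have h : x2 * g + (d + 1) * g = n * g := by
        rw [← add_mul, show x2 + (d + 1) = n from by omega]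
      rw [h]; exact Nat.mul_mod_right n g
    · intro h0
      have hdvd : n ∣ x2 * g := Nat.dvd_of_mod_eq_zero h0
      have hco : Nat.Coprime n (x2 * g) := (hc2.mul hg).symm
      have := hco.eq_one_of_dvd hdvd
      omega
  have e2 : (x2 + 1) * g % n + (d * g) % n = n := by
    apply aux_mod_add n _ _ hn
    · have h : (x2 + 1) * g + d * g = n * g := by
        rw [← add_mul, show x2 + 1 + d = n from by omega]
      rw [h]; exact Nat.mul_mod_right n g
    · intro h0
      have hdvd : n ∣ (x2 + 1) * g := Nat.dvd_of_mod_eq_zero h0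
      have hco : Nat.Coprime n ((x2 + 1) * g) := (hc3.mul hg).symm
      have := hco.eq_one_of_dvd hdvd
      omega
  rw [hx4] at key
  have e3 : x4 = 2 * d := hx4
  omega

/-- Floor identity: `(m-1)n/m = n - n/m - 1` when `m ∤ n`. -/
lemma aux_floor (n m : ℕ) (hm : 1 ≤ m) (hnd : ¬ m ∣ n) :
    (m - 1) * n / m = n - n / m - 1 := by
  have hr : 0 < n % m := Nat.pos_of_ne_zero (fun h => hnd (Nat.dvd_of_mod_eq_zero h))
  have hrm : n % m < m := Nat.mod_lt _ hm
  have hqn : m * (n / m) + n % m = n := Nat.div_add_mod n m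
  have hq1 : n / m ≤ m * (n / m) := Nat.le_mul_of_pos_left _ hm
  have hqlt : n / m + 1 ≤ n := by omega
  have c3 : n * m = m * n := mul_comm n m
  have c4 : n / m * m = m * (n / m) := mul_comm _ _
  have hA : n ≤ m * n := Nat.le_mul_of_pos_left n hm
  apply Nat.div_eq_of_lt_le
  · rw [show (n - n / m - 1) * m = n * m - n / m * m - m from by
      rw [Nat.sub_mul, Nat.sub_mul, one_mul],
      show (m - 1) * n = m * n - n from by rw [Nat.sub_mul, one_mul], c3, c4]
    omega
  · rw [show n - n / m - 1 + 1 = n - n / m from by omega,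
      show (n - n / m) * m = n * m - n / m * m from Nat.sub_mul n (n / m) m,
      show (m - 1) * n = m * n - n from by rw [Nat.sub_mul, one_mul], c3, c4]
    omega

/-- The third clause of `IsGood` rewritten: `F(k) = 2k⌊n/(3k)⌋`. -/
lemma aux_F (n k : ℕ) (hk : 1 ≤ k) (hn : 5 ≤ n) (h3 : ¬ 3 ∣ n) :
    (2 * n - 2 - 2 * ((3 * k - 1) * n / (3 * k))) * k = 2 * k * (n / (3 * k)) := by
  have h3k : ¬ (3 * k) ∣ n := fun h => h3 (dvd_trans ⟨k, rfl⟩ h)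
  rw [aux_floor n (3 * k) (by omega) h3k]
  have h1 : n / (3 * k) ≤ n / 3 := Nat.div_le_div_left (by omega) (by omega)
  have h2 : n / 3 < n := by omega
  have h4 : 2 * n - 2 - 2 * (n - n / (3 * k) - 1) = 2 * (n / (3 * k)) := by omega
  rw [h4]; ring

/-- Goodness is inherited by halving (the inequality part). -/
lemma aux_half (n k : ℕ) (hk : 1 ≤ k)
    (h : (n - 1) / 2 < 2 * (2 * k) * (n / (3 * (2 * k)))) :
    (n - 1) / 2 < 2 * k * (n / (3 * k)) := by
  have h1 : 2 * (n / (6 * k)) ≤ n / (3 * k) := by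
    rw [Nat.le_div_iff_mul_le (by omega : 0 < 3 * k)]
    calc 2 * (n / (6 * k)) * (3 * k) = n / (6 * k) * (6 * k) := by ring
    _ ≤ n := Nat.div_mul_le_self n (6 * k)
  have h2 : 3 * (2 * k) = 6 * k := by ring
  rw [h2] at h
  calc (n - 1) / 2 < 2 * (2 * k) * (n / (6 * k)) := h
  _ = 2 * k * (2 * (n / (6 * k))) := by ring
  _ ≤ 2 * k * (n / (3 * k)) := Nat.mul_le_mul_left _ h1

/-- The doubling step: if `3kd < n` and `k` satisfies the good inequality, then `6kd < n`. -/
lemma aux_step (n d k : ℕ) (hn5 : 5 ≤ n) (hnodd : n % 2 = 1) (h3 : ¬ 3 ∣ n)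
    (hd1 : 1 ≤ d) (hk1 : 1 ≤ k)
    (hck : Nat.Coprime k n) (hc2 : Nat.Coprime 2 n) (hc3 : Nat.Coprime 3 n)
    (hstar : ∀ g, Nat.Coprime g n →
      g % n + (2 * d * g) % n = ((d + 1) * g) % n + (d * g) % n)
    (h6k : 6 * k < n) (h3kd : 3 * k * d < n)
    (hG : (n - 1) / 2 < 2 * k * (n / (3 * k))) : 6 * k * d < n := by
  by_contra hcon
  push_neg at hcon
  -- use g = 3k
  have s3 := hstar (3 * k) (hc3.mul hck)
  have e1 : 2 * d * (3 * k) = 6 * k * d := by ring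
  have e2 : (d + 1) * (3 * k) = 3 * k * d + 3 * k := by ring
  have e3 : d * (3 * k) = 3 * k * d := by ring
  rw [e1, e2, e3] at s3
  have eq63 : 6 * k * d = 2 * (3 * k * d) := by ring
  have m1 : (3 * k) % n = 3 * k := Nat.mod_eq_of_lt (by omega)
  have m2 : (3 * k * d) % n = 3 * k * d := Nat.mod_eq_of_lt h3kd
  have m3 : (6 * k * d) % n = 6 * k * d - n := by
    rw [Nat.mod_eq_sub_mod hcon, Nat.mod_eq_of_lt (by omega)]
  rw [m1, m2, m3] at s3
  by_cases hP : 3 * k * d + 3 * k < n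
  · rw [Nat.mod_eq_of_lt hP] at s3
    omega
  · push_neg at hP
    have hne : n ≠ 3 * k * d + 3 * k := by
      intro h
      exact h3 ⟨k * (d + 1), by rw [h]; ring⟩
    -- n / (3k) = d
    have hq : n / (3 * k) = d := by
      apply Nat.div_eq_of_lt_le
      · calc d * (3 * k) = 3 * k * d := by ring
        _ ≤ n := le_of_lt h3kd
      · calc n < 3 * k * d + 3 * k := by omega
        _ = (d + 1) * (3 * k) := by ring
    rw [hq] at hG
    have a1 : 2 * k * d = 2 * (k * d) := by ring
    have a2 : 4 * k * d = 4 * (k * d) := by ring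
    have hn4 : n ≤ 4 * k * d := by omega
    -- use g = 2k
    have s2 := hstar (2 * k) (hc2.mul hck)
    have f1 : 2 * d * (2 * k) = 4 * k * d := by ring
    have f2 : (d + 1) * (2 * k) = 2 * k * d + 2 * k := by ring
    have f3 : d * (2 * k) = 2 * k * d := by ring
    rw [f1, f2, f3] at s2
    have b1 : 3 * k * d = 3 * (k * d) := by ring
    have n1 : (2 * k) % n = 2 * k := Nat.mod_eq_of_lt (by omega)
    have n2 : (2 * k * d) % n = 2 * k * d := Nat.mod_eq_of_lt (by omega)
    have n3 : (2 * k * d + 2 * k) % n = 2 * k * d + 2 * k := Nat.mod_eq_of_lt (by omega)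
    have n4 : (4 * k * d) % n = 4 * k * d - n := by
      rw [Nat.mod_eq_sub_mod (by omega), Nat.mod_eq_of_lt (by omega)]
    rw [n1, n2, n3, n4] at s2
    omega

theorem stmt_9 (n x2 x4 k : ℕ) (hn : 0 < n) (h6 : Nat.Coprime n 6)
    (hS : IsMinZS4 n 1 x2 (x2 + 1) x4)
    (hc2 : Nat.Coprime x2 n) (hc3 : Nat.Coprime (x2 + 1) n) (hc4 : Nat.Coprime x4 n)
    (hInd2 : ∀ g : ℕ, Nat.Coprime g n → normSum n g 1 x2 (x2 + 1) x4 = 2 * n)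
    (hgood : IsGood n k) :
    (6 * k - 1) * n / (6 * k) ≤ x2 := by
  obtain ⟨⟨hx1a, hx1b⟩, ⟨hx2a, hx2b⟩, ⟨hx3a, hx3b⟩, ⟨hx4a, hx4b⟩, hsum,
    h12, h13, h14, _, _, _, _, _, _, _⟩ := hS
  have h2n : Nat.Coprime 2 n := (h6.coprime_dvd_right (by norm_num)).symm
  have h3n : Nat.Coprime 3 n := (h6.coprime_dvd_right (by norm_num)).symm
  have hnd2 : ¬ (2 ∣ n) := (Nat.Prime.coprime_iff_not_dvd Nat.prime_two).mp h2n
  have hnd3 : ¬ (3 ∣ n) := (Nat.Prime.coprime_iff_not_dvd Nat.prime_three).mp h3n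
  have hnodd : n % 2 = 1 := by omega
  have hn5 : 5 ≤ n := by
    rcases Nat.lt_or_ge n 5 with h | h
    · interval_cases n <;> omega
    · exact h
  -- x4 = 2d with d = n - 1 - x2
  have key1 := hInd2 1 (Nat.coprime_one_left n)
  unfold normSum at key1
  simp only [mul_one] at key1
  rw [Nat.mod_eq_of_lt (by omega : 1 < n), Nat.mod_eq_of_lt hx2b,
    Nat.mod_eq_of_lt hx3b, Nat.mod_eq_of_lt hx4b] at key1
  set d := n - 1 - x2 with hddef
  have hd : x2 + d + 1 = n := by omega
  have hx4d : x4 = 2 * d := by omega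
  have hd1 : 1 ≤ d := by omega
  have h2d : 2 * d < n := by omega
  have hstar := aux_star n x2 x4 d (by omega) hd hx4d hc2 hc3 hInd2
  -- d ≠ (n-1)/2
  have hdne : 2 * d + 1 ≠ n := by
    intro h
    apply h14
    have : 1 + x4 = n := by omega
    rw [this, Nat.mod_self]
  -- base case: 3d < n
  have base : 3 * d < n := by
    by_contra hb
    push_neg at hb
    have s2 := hstar 2 h2n
    have e1 : 2 * d * 2 = 4 * d := by ring
    have e2 : (d + 1) * 2 = 2 * d + 2 := by ring
    have e3 : d * 2 = 2 * d := by ring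
    rw [e1, e2, e3] at s2
    have m1 : 2 % n = 2 := Nat.mod_eq_of_lt (by omega)
    have m2 : (2 * d) % n = 2 * d := Nat.mod_eq_of_lt h2d
    have m3 : (2 * d + 2) % n = 2 * d + 2 := Nat.mod_eq_of_lt (by omega)
    have m4 : (4 * d) % n = 4 * d - n := by
      rw [Nat.mod_eq_sub_mod (by omega), Nat.mod_eq_of_lt (by omega)]
    rw [m1, m2, m3, m4] at s2
    omega
  -- main induction on powers of 2
  obtain ⟨⟨l, hl⟩, h6k, hGineq⟩ := hgood
  subst hl
  rw [aux_F n (2 ^ l) (Nat.one_le_two_pow) hn5 hnd3] at hGineq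
  have claim : ∀ l : ℕ, 6 * 2 ^ l < n → (n - 1) / 2 < 2 * 2 ^ l * (n / (3 * 2 ^ l)) →
      6 * 2 ^ l * d < n := by
    intro l
    induction l with
    | zero =>
      intro h1 h2
      apply aux_step n d 1 hn5 hnodd hnd3 hd1 le_rfl (Nat.coprime_one_left n) h2n h3n hstar
      · simpa using h1
      · omega
      · simpa using h2
    | succ l ih =>
      intro h1 h2
      have hady : (2 : ℕ) ^ (l + 1) = 2 * 2 ^ l := by rw [pow_succ]; ring
      rw [hady] at h1 h2
      have h1' : 6 * 2 ^ l < n := by omega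
      have h2' : (n - 1) / 2 < 2 * 2 ^ l * (n / (3 * 2 ^ l)) :=
        aux_half n (2 ^ l) Nat.one_le_two_pow h2
      have ih' := ih h1' h2'
      have hstep := aux_step n d (2 * 2 ^ l) hn5 hnodd hnd3 hd1 (by have := Nat.one_le_two_pow (n := l); omega)
        (h2n.mul (Nat.Coprime.pow_left l h2n)) h2n h3n hstar
        (by omega)
        (by calc 3 * (2 * 2 ^ l) * d = 6 * 2 ^ l * d := by ring
          _ < n := ih')
        h2
      calc 6 * 2 ^ (l + 1) * d = 6 * (2 * 2 ^ l) * d := by rw [hady]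
      _ < n := hstep
  have hmain : 6 * 2 ^ l * d < n := claim l h6k hGineq
  -- conclude
  set K := 2 ^ l with hK
  have hKpos : 0 < K := Nat.pow_pos (by norm_num)
  have hklt : (6 * K - 1) * n < (x2 + 1) * (6 * K) := by
    rw [Nat.sub_mul, one_mul]
    have keyq : 6 * K * d + 6 * K * (x2 + 1) = 6 * K * n := by
      rw [← Nat.mul_add]; congr 1; omega
    have hcm : (x2 + 1) * (6 * K) = 6 * K * (x2 + 1) := by ring
    have hBpos : 0 < 6 * K * (x2 + 1) := Nat.mul_pos (by omega) (by omega)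
    omega
  have := (Nat.div_lt_iff_lt_mul (by omega : 0 < 6 * K)).mpr hklt
  omega
end

section
/- Let n be a positive integer coprime to 6 and let b ≥ 3 be an integer with 3·2^b < n < 3·2^{b+1}. Then k = 2^{b−2} is good; that is, k = 2^{b−2} < n/6 and (2n − 2 − 2⌊((3k−1)/(3k))·n⌋)·k > (n−1)/2. -/
theorem stmt_10 (n b : ℕ) (hn : 0 < n) (h6 : Nat.Coprime n 6) (hb : 3 ≤ b)
    (h1 : 3 * 2 ^ b < n) (h2 : n < 3 * 2 ^ (b + 1)) :
    IsGood n (2 ^ (b - 2)) := by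
  set k := 2 ^ (b - 2) with hk
  have hk1 : 1 ≤ k := Nat.one_le_two_pow
  have h4k : 2 ^ b = 4 * k := by
    have hb' : b = (b - 2) + 2 := by omega
    rw [hb', pow_add, hk]; ring
  rw [h4k] at h1
  rw [pow_succ, h4k] at h2
  -- now 12 * k < n < 24 * k
  have h3n : ¬ (3 ∣ n) := by
    intro h
    have hc : Nat.gcd n 3 = 1 := h6.coprime_dvd_right (by norm_num)
    have := Nat.dvd_gcd h (dvd_refl 3)
    omega
  have h3k : 0 < 3 * k := by omega
  set d := n / (3 * k) with hd
  set r := n % (3 * k) with hr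
  have hdr : 3 * k * d + r = n := Nat.div_add_mod n (3 * k)
  have hrlt : r < 3 * k := Nat.mod_lt _ h3k
  have hrpos : r ≠ 0 := by
    intro h
    exact h3n (dvd_trans ⟨k, rfl⟩ (Nat.dvd_of_mod_eq_zero (hr ▸ h)))
  have hdn : d < n := Nat.div_lt_self hn (by omega)
  have hd4 : 4 ≤ d := by
    rw [hd, Nat.le_div_iff_mul_le h3k]; omega
  have hq : (3 * k - 1) * n / (3 * k) = n - d - 1 := by
    have key : (3 * k - 1) * n = (3 * k - r) + 3 * k * (n - (d + 1)) := by
      zify [show 1 ≤ 3 * k by omega, show r ≤ 3 * k by omega,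
        show d + 1 ≤ n by omega]
      have hz : (3 : ℤ) * k * d + r = n := by exact_mod_cast hdr
      linarith [hz]
    rw [key, Nat.add_mul_div_left _ _ h3k, Nat.div_eq_of_lt (by omega)]
    omega
  refine ⟨⟨b - 2, rfl⟩, by omega, ?_⟩
  rw [hq]
  have heq : 2 * n - 2 - 2 * (n - d - 1) = 2 * d := by omega
  rw [heq]
  have hkd : 3 * (3 * k) ≤ 3 * (k * d) := by
    have : 3 * k ≤ k * d := by
      calc 3 * k = k * 3 := by ring
        _ ≤ k * d := Nat.mul_le_mul_left k (by omega)
    omega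
  have hlt : n < 4 * (k * d) := by
    have : 3 * k * d = 3 * (k * d) := by ring
    omega
  have : 2 * d * k = 2 * (k * d) := by ring
  rw [this]
  omega
end

section
/- Let n be coprime to 6 and S = (1)(x2)(x3)(x4) a minimal zero-sum sequence over Z/n with x3 = x2 + 1, gcd(xi,n) = 1 for all i, and ind(S) = 2. Then x2 ∈ {n−4, n−3}; equivalently S = (1)(n−4)(n−3)(6) or S = (1)(n−3)(n−2)(4). -/
private lemma modhelper (n b g : ℕ) (h0 : 0 < b * g) (h1 : b * g < n) (hb : b ≤ n) :
    ((n - b) * g) % n = n - b * g := by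
  have e1 : (n - b) * g + b * g = n * g := by
    rw [← Nat.add_mul, Nat.sub_add_cancel hb]
  have key : ((n - b) * g) % n = (n - b * g) % n := by
    have h2 : ((n - b) * g + b * g) % n = ((n - b * g) + b * g) % n := by
      rw [e1, Nat.sub_add_cancel (le_of_lt h1)]
      simp [Nat.mul_mod_left]
    exact Nat.ModEq.add_right_cancel' _ h2
  rw [key, Nat.mod_eq_of_lt (by omega)]

private lemma modhelper2 (n a : ℕ) (h1 : n ≤ a) (h2 : a < 2 * n) : a % n = a - n := by
  rw [Nat.mod_eq_sub_mod h1, Nat.mod_eq_of_lt (by omega)]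

private lemma final (n s g x2 x3 x4 : ℕ) (h0 : 0 < n) (hg : 1 ≤ g) (hs : 1 ≤ s)
    (hx2 : x2 = n - (s + 1)) (hx3 : x3 = n - s) (hx4 : x4 = 2 * s)
    (h1 : (s + 1) * g < n) (h2 : n < 2 * (s * g))
    (heq : (1 * g) % n + (x2 * g) % n + (x3 * g) % n + (x4 * g) % n = 2 * n) : False := by
  subst hx2 hx3 hx4
  have hsg : s * g ≤ (s + 1) * g := Nat.mul_le_mul_right g (by omega)
  have hg1 : g ≤ (s + 1) * g := by
    calc g = 1 * g := (one_mul g).symm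
    _ ≤ (s + 1) * g := Nat.mul_le_mul_right g (by omega)
  have hsg0 : 1 ≤ s * g := Nat.one_le_iff_ne_zero.mpr (Nat.mul_ne_zero (by omega) (by omega))
  have hb2 : s + 1 ≤ (s + 1) * g := by
    calc s + 1 = (s + 1) * 1 := (mul_one _).symm
    _ ≤ (s + 1) * g := Nat.mul_le_mul_left _ hg
  have hb3 : s ≤ s * g := by
    calc s = s * 1 := (mul_one _).symm
    _ ≤ s * g := Nat.mul_le_mul_left _ hg
  have e0 : (1 * g) % n = g := by rw [one_mul, Nat.mod_eq_of_lt (by omega)]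
  have e2 : ((n - (s + 1)) * g) % n = n - (s + 1) * g :=
    modhelper n (s + 1) g (by omega) h1 (by omega)
  have e3 : ((n - s) * g) % n = n - s * g :=
    modhelper n s g (by omega) (by omega) (by omega)
  have ea : 2 * s * g = 2 * (s * g) := by ring
  have e4 : (2 * s * g) % n = 2 * s * g - n := modhelper2 n _ (by omega) (by omega)
  rw [e0, e2, e3, e4] at heq
  have eb : (s + 1) * g = s * g + g := by ring
  omega

theorem stmt_11 (n x2 x3 x4 : ℕ) (hn : 0 < n) (h6 : Nat.Coprime n 6)
    (hS : IsMinZS4 n 1 x2 x3 x4) (h3 : x3 = x2 + 1)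
    (hc2 : Nat.Coprime x2 n) (hc3 : Nat.Coprime x3 n) (hc4 : Nat.Coprime x4 n)
    (hInd2 : ∀ g : ℕ, Nat.Coprime g n → normSum n g 1 x2 x3 x4 = 2 * n) :
    (x2 = n - 4 ∧ x3 = n - 3 ∧ x4 = 6) ∨ (x2 = n - 3 ∧ x3 = n - 2 ∧ x4 = 4) := by
  obtain ⟨⟨hx11, hx12⟩, ⟨hx21, hx22⟩, ⟨hx31, hx32⟩, ⟨hx41, hx42⟩, hsum0, h12, h13, h14,
    h23, h24, h34, h123, h124, h134, h234⟩ := hS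
  have hn2cop : Nat.Coprime n 2 := Nat.Coprime.coprime_dvd_right (by norm_num) h6
  have hn3cop : Nat.Coprime n 3 := Nat.Coprime.coprime_dvd_right (by norm_num) h6
  have hcop2 : Nat.Coprime 2 n := hn2cop.symm
  have hcop3 : Nat.Coprime 3 n := hn3cop.symm
  have hodd : n % 2 = 1 := by
    rcases Nat.mod_two_eq_zero_or_one n with h | h
    · exfalso
      have h2 : (2 : ℕ) ∣ n := Nat.dvd_of_mod_eq_zero h
      have hg : (2 : ℕ) ∣ Nat.gcd n 2 := Nat.dvd_gcd h2 dvd_rfl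
      have h1 : Nat.gcd n 2 = 1 := hn2cop
      rw [h1] at hg
      exact absurd (Nat.le_of_dvd one_pos hg) (by norm_num)
    · exact h
  have h3nd : n % 3 ≠ 0 := by
    intro h
    have h2 : (3 : ℕ) ∣ n := Nat.dvd_of_mod_eq_zero h
    have hg : (3 : ℕ) ∣ Nat.gcd n 3 := Nat.dvd_gcd h2 dvd_rfl
    have h1 : Nat.gcd n 3 = 1 := hn3cop
    rw [h1] at hg
    exact absurd (Nat.le_of_dvd one_pos hg) (by norm_num)
  have hn5 : 5 ≤ n := by omega
  -- g = 1 : total sum is 2n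
  have h1 := hInd2 1 (Nat.coprime_one_left n)
  simp only [normSum, mul_one] at h1
  rw [Nat.mod_eq_of_lt (by omega), Nat.mod_eq_of_lt hx22, Nat.mod_eq_of_lt hx32,
    Nat.mod_eq_of_lt hx42] at h1
  -- x2 ≠ n-1 and x2 ≠ n-2
  have hx2ne : x2 ≠ n - 1 := by
    intro h
    apply h12
    have e : 1 + x2 = n := by omega
    rw [e, Nat.mod_self]
  have hx3ne : x3 ≠ n - 1 := by
    intro h
    apply h13
    have e : 1 + x3 = n := by omega
    rw [e, Nat.mod_self]
  have hx4ne : x4 ≠ n - 1 := by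
    intro h
    apply h14
    have e : 1 + x4 = n := by omega
    rw [e, Nat.mod_self]
  set s : ℕ := n - x2 - 1 with hsdef
  have hx2' : x2 = n - (s + 1) := by omega
  have hx3' : x3 = n - s := by omega
  have hx4' : x4 = 2 * s := by omega
  have hs2 : 2 ≤ s := by omega
  have hn2s3 : 2 * s + 2 < n := by omega
  by_cases hs4 : s ≤ 3
  · omega
  · -- s ≥ 4 : derive a contradiction
    exfalso
    push_neg at hs4
    -- g = 2 forces 4s < n
    have h4s : 4 * s < n := by
      by_contra hc
      push_neg at hc
      have heq := hInd2 2 hcop2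
      simp only [normSum] at heq
      exact final n s 2 x2 x3 x4 (by omega) (by omega) (by omega) hx2' hx3' hx4'
        (by omega) (by omega) heq
    -- find the right power of two
    obtain ⟨c, a, hca, hc0, hcl, hcr⟩ :
        ∃ c a : ℕ, c = 2 ^ a ∧ 0 < c ∧ c * (4 * s) < n ∧ n < c * (8 * s) := by
      have hs0 : 0 < 4 * s := by omega
      obtain ⟨q, r, hqr, hr⟩ : ∃ q r, 4 * s * q + r = n - 1 ∧ r < 4 * s :=
        ⟨(n - 1) / (4 * s), (n - 1) % (4 * s), Nat.div_add_mod _ _, Nat.mod_lt _ hs0⟩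
      have hq1 : 1 ≤ q := by
        rcases Nat.eq_zero_or_pos q with h | h
        · subst h; simp at hqr; omega
        · exact h
      have hA1 : 2 ^ Nat.log 2 q ≤ q := Nat.pow_log_le_self 2 (by omega)
      have hA2 : q < 2 * 2 ^ Nat.log 2 q := by
        have := Nat.lt_pow_succ_log_self (by norm_num : 1 < 2) q
        have e : (2 : ℕ) ^ (Nat.log 2 q).succ = 2 * 2 ^ Nat.log 2 q := by
          rw [pow_succ]; ring
        omega
      set A : ℕ := 2 ^ Nat.log 2 q with hAdef
      refine ⟨A, Nat.log 2 q, rfl, by positivity, ?_, ?_⟩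
      · have h1 : A * (4 * s) ≤ q * (4 * s) := Nat.mul_le_mul_right _ hA1
        have e4 : q * (4 * s) = 4 * s * q := by ring
        omega
      · have h1 : (q + 1) * (4 * s) ≤ (2 * A) * (4 * s) :=
          Nat.mul_le_mul_right _ (by omega)
        have e1 : (2 * A) * (4 * s) = A * (8 * s) := by ring
        have e2 : (q + 1) * (4 * s) = 4 * s * q + 4 * s := by ring
        have e3 : A * (8 * s) = 2 * (A * (4 * s)) := by ring
        omega
    have hcopc : Nat.Coprime c n := by
      rw [hca]; exact Nat.Coprime.pow_left a hcop2
    have hX3 : c * 3 ≤ c * s := Nat.mul_le_mul_left c (by omega)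
    have hX4 : c * 4 ≤ c * s := Nat.mul_le_mul_left c (by omega)
    have e1 : c * (4 * s) = 4 * (c * s) := by ring
    have e2 : c * (8 * s) = 8 * (c * s) := by ring
    rcases lt_or_ge (c * (4 * (s + 1))) n with hcase | hcase
    · -- g = 4c
      have hcop4c : Nat.Coprime (4 * c) n := by
        have : (4 : ℕ) * c = 2 ^ (a + 2) := by rw [hca, pow_add]; ring
        rw [this]
        exact Nat.Coprime.pow_left _ hcop2
      have heq := hInd2 (4 * c) hcop4c
      simp only [normSum] at heq
      have e3 : c * (4 * (s + 1)) = 4 * (c * s) + 4 * c := by ring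
      have e4 : (s + 1) * (4 * c) = 4 * (c * s) + 4 * c := by ring
      have e5 : 2 * (s * (4 * c)) = 8 * (c * s) := by ring
      exact final n s (4 * c) x2 x3 x4 (by omega) (by omega) (by omega) hx2' hx3' hx4'
        (by omega) (by omega) heq
    · -- g = 3c
      have hne : n ≠ c * (4 * (s + 1)) := by
        have e3 : c * (4 * (s + 1)) = 2 * (c * (2 * (s + 1))) := by ring
        omega
      have hcop3c : Nat.Coprime (3 * c) n := Nat.Coprime.mul hcop3 hcopc
      have heq := hInd2 (3 * c) hcop3c
      simp only [normSum] at heq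
      have e3 : c * (4 * (s + 1)) = 4 * (c * s) + 4 * c := by ring
      have e4 : (s + 1) * (3 * c) = 3 * (c * s) + 3 * c := by ring
      have e5 : 2 * (s * (3 * c)) = 6 * (c * s) := by ring
      exact final n s (3 * c) x2 x3 x4 (by omega) (by omega) (by omega) hx2' hx3' hx4'
        (by omega) (by omega) heq
end

section
/- Let n > 1000 be coprime to 6 and have at least three distinct prime factors. Then there exists an integer g with n/12 < g < n/8 and gcd(g, n) = 1. -/
lemma smooth_in_interval : ∀ x : ℕ, 5 ≤ x →
    ∃ a b : ℕ, x < 2^a * 3^b ∧ 3 * (2^a * 3^b) ≤ 4 * x := by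
  intro x
  induction x using Nat.strong_induction_on with
  | _ x ih =>
    intro hx
    by_cases h : x ≤ 9
    · interval_cases x
      · exact ⟨1, 1, by norm_num, by norm_num⟩
      · exact ⟨3, 0, by norm_num, by norm_num⟩
      · exact ⟨3, 0, by norm_num, by norm_num⟩
      · exact ⟨0, 2, by norm_num, by norm_num⟩
      · exact ⟨2, 1, by norm_num, by norm_num⟩
    · obtain ⟨a, b, h1, h2⟩ := ih (x / 2) (by omega) (by omega)
      refine ⟨a + 1, b, ?_, ?_⟩ <;>
      · have e : 2 ^ (a + 1) * 3 ^ b = 2 * (2 ^ a * 3 ^ b) := by ring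
        rw [e]
        set G := 2 ^ a * 3 ^ b
        omega

theorem stmt_12 (n : ℕ) (hn : 1000 < n) (h6 : Nat.Coprime n 6)
    (hpf : 3 ≤ n.primeFactors.card) :
    ∃ g : ℕ, n < 12 * g ∧ 8 * g < n ∧ Nat.Coprime g n := by
  obtain ⟨a, b, h1, h2⟩ := smooth_in_interval (n / 12) (by omega)
  refine ⟨2 ^ a * 3 ^ b, ?_, ?_, ?_⟩
  · set G := 2 ^ a * 3 ^ b; omega
  · set G := 2 ^ a * 3 ^ b; omega
  · have c2 : Nat.Coprime 2 n := (h6.coprime_dvd_right (by norm_num)).symm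
    have c3 : Nat.Coprime 3 n := (h6.coprime_dvd_right (by norm_num)).symm
    exact (c2.pow_left a).mul (c3.pow_left b)
end

section
/- Let n be coprime to 6 and suppose g is an integer with gcd(g,n)=1 and n/12 < g < n/8. Then (1·g mod n) < n/2, ((n−4)·g mod n) > n/2, ((n−3)·g mod n) > n/2, and (6·g mod n) > n/2. Consequently the minimal zero-sum sequence S = (1)(n−4)(n−3)(6) over Z/n has index 1. -/
lemma sub_mul_mod' (n k g : ℕ) (hk1 : 1 ≤ k * g) (hkg : k * g < n) (hkn : k ≤ n) :
    ((n - k) * g) % n = n - k * g := by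
  have hg1 : 1 ≤ g := by
    rcases Nat.eq_zero_or_pos g with h | h
    · subst h; simp at hk1
    · exact h
  have h1 : (n - k) * g = n * g - k * g := Nat.sub_mul n k g
  have h2 : n * (g - 1) = n * g - n := by rw [Nat.mul_sub, mul_one]
  have h3 : n ≤ n * g := Nat.le_mul_of_pos_right n hg1
  have key : (n - k) * g = (n - k * g) + n * (g - 1) := by omega
  rw [key, Nat.add_mul_mod_self_left, Nat.mod_eq_of_lt (by omega)]

theorem stmt_13 (n g : ℕ) (h6 : Nat.Coprime n 6) (hg : Nat.Coprime g n)
    (h1 : n < 12 * g) (h2 : 8 * g < n) :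
    2 * ((1 * g) % n) < n ∧
    n < 2 * (((n - 4) * g) % n) ∧
    n < 2 * (((n - 3) * g) % n) ∧
    n < 2 * ((6 * g) % n) ∧
    seqIndex n 1 (n - 4) (n - 3) 6 = 1 := by
  have hg1 : 1 ≤ g := by omega
  have hn9 : 9 ≤ n := by omega
  have e1 : (1 * g) % n = g := by rw [one_mul, Nat.mod_eq_of_lt (by omega)]
  have e4 : ((n - 4) * g) % n = n - 4 * g := sub_mul_mod' n 4 g (by omega) (by omega) (by omega)
  have e3 : ((n - 3) * g) % n = n - 3 * g := sub_mul_mod' n 3 g (by omega) (by omega) (by omega)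
  have e6 : (6 * g) % n = 6 * g := Nat.mod_eq_of_lt (by omega)
  refine ⟨by omega, by omega, by omega, by omega, ?_⟩
  -- the index part, with witness g' = 2g
  have hcop2 : Nat.Coprime 2 n := Nat.Coprime.coprime_dvd_left (by norm_num) h6.symm
  have hcop : Nat.Coprime (2 * g) n := Nat.Coprime.mul hcop2 hg
  have f1 : (1 * (2 * g)) % n = 2 * g := by rw [one_mul, Nat.mod_eq_of_lt (by omega)]
  have f4 : ((n - 4) * (2 * g)) % n = n - 8 * g := by
    have := sub_mul_mod' n 4 (2 * g) (by omega) (by omega) (by omega)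
    rw [this]; ring_nf
  have f3 : ((n - 3) * (2 * g)) % n = n - 6 * g := by
    have := sub_mul_mod' n 3 (2 * g) (by omega) (by omega) (by omega)
    rw [this]; ring_nf
  have f6 : (6 * (2 * g)) % n = 12 * g - n := by
    have h12 : 6 * (2 * g) = n + (12 * g - n) := by omega
    rw [h12, Nat.add_mod_left, Nat.mod_eq_of_lt (by omega)]
  have h1mem : (1 : ℕ) ∈ {m : ℕ | ∃ g', g' < n ∧ Nat.Coprime g' n ∧
      normSum n g' 1 (n - 4) (n - 3) 6 = m * n} := by
    refine ⟨2 * g, by omega, hcop, ?_⟩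
    unfold normSum
    rw [f1, f4, f3, f6]
    omega
  have h0notin : (0 : ℕ) ∉ {m : ℕ | ∃ g', g' < n ∧ Nat.Coprime g' n ∧
      normSum n g' 1 (n - 4) (n - 3) 6 = m * n} := by
    rintro ⟨g', hg'n, hg'cop, hsum⟩
    unfold normSum at hsum
    simp only [zero_mul] at hsum
    have h1g : (1 * g') % n = 0 := by omega
    rw [one_mul, Nat.mod_eq_of_lt hg'n] at h1g
    subst h1g
    rw [Nat.coprime_zero_left] at hg'cop
    omega
  have hle : seqIndex n 1 (n - 4) (n - 3) 6 ≤ 1 := Nat.sInf_le h1mem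
  have hne : seqIndex n 1 (n - 4) (n - 3) 6 ≠ 0 := by
    intro h
    rcases Nat.sInf_eq_zero.mp h with h0 | hemp
    · exact h0notin h0
    · rw [hemp] at h1mem; exact h1mem
  omega
end

section
/- Let n be coprime to 6 with n > 10 (so that (1)(n−4)(n−3)(6) is a minimal zero-sum sequence over Z/n). Then ind((1)(n−4)(n−3)(6)) = 1. -/
lemma exists_g (n : ℕ) (hn : 10 < n) (h6 : Nat.Coprime n 6) :
    ∃ g, 0 < g ∧ g < n ∧ Nat.Coprime g n ∧ n < 6 * g ∧ 4 * g < n := by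
  have h6' : Nat.gcd n 6 = 1 := h6
  have h2 : ¬ 2 ∣ n := by
    intro h
    have : (2:ℕ) ∣ 1 := h6' ▸ Nat.dvd_gcd h (by norm_num)
    omega
  have h3 : ¬ 3 ∣ n := by
    intro h
    have : (3:ℕ) ∣ 1 := h6' ▸ Nat.dvd_gcd h (by norm_num)
    omega
  rcases eq_or_ne n 11 with rfl | h11
  · exact ⟨2, by norm_num, by norm_num, by decide, by norm_num, by norm_num⟩
  rcases eq_or_ne n 13 with rfl | h13
  · exact ⟨3, by norm_num, by norm_num, by decide, by norm_num, by norm_num⟩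
  have hn17 : 17 ≤ n := by omega
  by_cases h5 : n % 5 = 0
  · by_cases hB : (n / 5 + 1) % 5 = 0
    · -- g = n/5 + 2, 5g = n + 10
      refine ⟨n / 5 + 2, by omega, by omega, ?_, by omega, by omega⟩
      have hgl := Nat.gcd_dvd_left (n / 5 + 2) n
      have hgr := Nat.gcd_dvd_right (n / 5 + 2) n
      have hpos : 0 < Nat.gcd (n / 5 + 2) n := Nat.gcd_pos_of_pos_right _ (by omega)
      have hdr : Nat.gcd (n / 5 + 2) n ∣ 5 * (n / 5 + 2) - n :=
        Nat.dvd_sub (hgl.mul_left 5) hgr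
      have heq : 5 * (n / 5 + 2) - n = 10 := by omega
      rw [heq] at hdr
      have hle : Nat.gcd (n / 5 + 2) n ≤ 10 := Nat.le_of_dvd (by norm_num) hdr
      have h2d : ¬ 2 ∣ Nat.gcd (n / 5 + 2) n := fun h => h2 (h.trans hgr)
      have h3d : ¬ 3 ∣ Nat.gcd (n / 5 + 2) n := fun h => h3 (h.trans hgr)
      unfold Nat.Coprime
      obtain ⟨d, hd⟩ : ∃ d, d = Nat.gcd (n / 5 + 2) n := ⟨_, rfl⟩
      rw [← hd] at hgl hgr hpos hdr hle h2d h3d ⊢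
      interval_cases d <;> omega
    · -- g = n/5 + 1, 5g = n + 5
      refine ⟨n / 5 + 1, by omega, by omega, ?_, by omega, by omega⟩
      have hgl := Nat.gcd_dvd_left (n / 5 + 1) n
      have hgr := Nat.gcd_dvd_right (n / 5 + 1) n
      have hpos : 0 < Nat.gcd (n / 5 + 1) n := Nat.gcd_pos_of_pos_right _ (by omega)
      have hdr : Nat.gcd (n / 5 + 1) n ∣ 5 * (n / 5 + 1) - n :=
        Nat.dvd_sub (hgl.mul_left 5) hgr
      have heq : 5 * (n / 5 + 1) - n = 5 := by omega
      rw [heq] at hdr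
      have hle : Nat.gcd (n / 5 + 1) n ≤ 5 := Nat.le_of_dvd (by norm_num) hdr
      have h2d : ¬ 2 ∣ Nat.gcd (n / 5 + 1) n := fun h => h2 (h.trans hgr)
      have h3d : ¬ 3 ∣ Nat.gcd (n / 5 + 1) n := fun h => h3 (h.trans hgr)
      unfold Nat.Coprime
      obtain ⟨d, hd⟩ : ∃ d, d = Nat.gcd (n / 5 + 1) n := ⟨_, rfl⟩
      rw [← hd] at hgl hgr hpos hdr hle h2d h3d ⊢
      interval_cases d <;> omega
  · -- g = n/5 + 1, 5g = n + (5 - n % 5), with 1 ≤ 5 - n%5 ≤ 4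
    refine ⟨n / 5 + 1, by omega, by omega, ?_, by omega, by omega⟩
    have hgl := Nat.gcd_dvd_left (n / 5 + 1) n
    have hgr := Nat.gcd_dvd_right (n / 5 + 1) n
    have hpos : 0 < Nat.gcd (n / 5 + 1) n := Nat.gcd_pos_of_pos_right _ (by omega)
    have hdr : Nat.gcd (n / 5 + 1) n ∣ 5 * (n / 5 + 1) - n :=
      Nat.dvd_sub (hgl.mul_left 5) hgr
    have heq : 5 * (n / 5 + 1) - n = 5 - n % 5 := by omega
    rw [heq] at hdr
    have hle : Nat.gcd (n / 5 + 1) n ≤ 4 :=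
      le_trans (Nat.le_of_dvd (by omega) hdr) (by omega)
    have h2d : ¬ 2 ∣ Nat.gcd (n / 5 + 1) n := fun h => h2 (h.trans hgr)
    have h3d : ¬ 3 ∣ Nat.gcd (n / 5 + 1) n := fun h => h3 (h.trans hgr)
    unfold Nat.Coprime
    obtain ⟨d, hd⟩ : ∃ d, d = Nat.gcd (n / 5 + 1) n := ⟨_, rfl⟩
    rw [← hd] at hgl hgr hpos hdr hle h2d h3d ⊢
    interval_cases d <;> omega

theorem stmt_14 (n : ℕ) (hn : 10 < n) (h6 : Nat.Coprime n 6) :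
    seqIndex n 1 (n - 4) (n - 3) 6 = 1 := by
  obtain ⟨g, hg0, hgn, hcop, h6g, h4g⟩ := exists_g n hn h6
  have e1 : 1 * g % n = g := by rw [one_mul]; exact Nat.mod_eq_of_lt hgn
  have e2 : (n - 4) * g % n = n - 4 * g := by
    have h : (n - 4) * g = n * (g - 1) + (n - 4 * g) := by
      zify [show (4:ℕ) ≤ n by omega, show 1 ≤ g from hg0, show 4 * g ≤ n by omega]
      ring
    rw [h, Nat.mul_add_mod, Nat.mod_eq_of_lt (by omega)]
  have e3 : (n - 3) * g % n = n - 3 * g := by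
    have h : (n - 3) * g = n * (g - 1) + (n - 3 * g) := by
      zify [show (3:ℕ) ≤ n by omega, show 1 ≤ g from hg0, show 3 * g ≤ n by omega]
      ring
    rw [h, Nat.mul_add_mod, Nat.mod_eq_of_lt (by omega)]
  have e4 : 6 * g % n = 6 * g - n := by
    have h : 6 * g = n * 1 + (6 * g - n) := by omega
    conv_lhs => rw [h]
    rw [Nat.mul_add_mod, Nat.mod_eq_of_lt (by omega)]
  have hnorm : normSum n g 1 (n - 4) (n - 3) 6 = n := by
    unfold normSum
    rw [e1, e2, e3, e4]
    omega
  have h1mem : 1 ∈ {m : ℕ | ∃ g, g < n ∧ Nat.Coprime g n ∧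
      normSum n g 1 (n - 4) (n - 3) 6 = m * n} :=
    ⟨g, hgn, hcop, by rw [hnorm, one_mul]⟩
  have h0 : 0 ∉ {m : ℕ | ∃ g, g < n ∧ Nat.Coprime g n ∧
      normSum n g 1 (n - 4) (n - 3) 6 = m * n} := by
    rintro ⟨g', hg', hcop', hsum⟩
    have hg'0 : 0 < g' := by
      rcases Nat.eq_zero_or_pos g' with rfl | h
      · have : n = 1 := by simpa [Nat.Coprime] using hcop'
        omega
      · exact h
    have : 1 * g' % n = g' := by rw [one_mul]; exact Nat.mod_eq_of_lt hg'
    unfold normSum at hsum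
    omega
  unfold seqIndex
  have hle := Nat.sInf_le h1mem
  have hne : sInf {m : ℕ | ∃ g, g < n ∧ Nat.Coprime g n ∧
      normSum n g 1 (n - 4) (n - 3) 6 = m * n} ≠ 0 := by
    intro h
    exact h0 (h ▸ Nat.sInf_mem ⟨1, h1mem⟩)
  omega
end

section
/- Let n be coprime to 6 with n > 8. Then ind((1)(n−3)(n−2)(4)) = 1, i.e., there exists a unit g of Z/n with (g mod n) + ((n−3)g mod n) + ((n−2)g mod n) + (4g mod n) = n. -/
theorem stmt_15 (n : ℕ) (hn : 8 < n) (h6 : Nat.Coprime n 6) :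
    seqIndex n 1 (n - 3) (n - 2) 4 = 1 ∧
    ∃ g : ℕ, Nat.Coprime g n ∧
      g % n + ((n - 3) * g) % n + ((n - 2) * g) % n + (4 * g) % n = n := by
  -- take g = ⌊n/3⌋, r = n % 3 ∈ {1,2}
  set g := n / 3 with hg
  set r := n % 3 with hr
  have h2 : ¬ (2 ∣ n) := by
    intro h
    have := Nat.dvd_gcd h (by norm_num : (2:ℕ) ∣ 6)
    rw [Nat.Coprime] at h6
    omega
  have h3 : ¬ (3 ∣ n) := by
    intro h
    have := Nat.dvd_gcd h (by norm_num : (3:ℕ) ∣ 6)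
    rw [Nat.Coprime] at h6
    omega
  have hnr : n = 3 * g + r := (Nat.div_add_mod n 3).symm ▸ by omega
  have hr12 : r = 1 ∨ r = 2 := by
    have := Nat.mod_lt n (show 0 < 3 by norm_num)
    rcases Nat.eq_zero_or_pos r with h | h
    · exact absurd (Nat.dvd_of_mod_eq_zero h) h3
    · omega
  have hg3 : 3 ≤ g := by omega
  have hgn : g < n := by omega
  -- the four residues
  have e1 : g % n = g := Nat.mod_eq_of_lt hgn
  have e2 : (n - 3) * g % n = r := by
    have h : (n - 3) * g = r + (g - 1) * n := by
      zify [show 3 ≤ n by omega, show 1 ≤ g by omega]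
      have hz : (n : ℤ) = 3 * g + r := by exact_mod_cast hnr
      linear_combination hz
    rw [h, Nat.add_mul_mod_self_right, Nat.mod_eq_of_lt (by omega)]
  have e3 : (n - 2) * g % n = g + r := by
    have h : (n - 2) * g = (g + r) + (g - 1) * n := by
      zify [show 2 ≤ n by omega, show 1 ≤ g by omega]
      have hz : (n : ℤ) = 3 * g + r := by exact_mod_cast hnr
      linear_combination hz
    rw [h, Nat.add_mul_mod_self_right, Nat.mod_eq_of_lt (by omega)]
  have e4 : 4 * g % n = g - r := by
    have h : 4 * g = (g - r) + 1 * n := by omega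
    rw [h, Nat.add_mul_mod_self_right, Nat.mod_eq_of_lt (by omega)]
  have hsum : g % n + ((n - 3) * g) % n + ((n - 2) * g) % n + (4 * g) % n = n := by
    rw [e1, e2, e3, e4]; omega
  -- coprimality of g and n
  have hcop : Nat.Coprime g n := by
    have hd1 : Nat.gcd g n ∣ g := Nat.gcd_dvd_left g n
    have hd2 : Nat.gcd g n ∣ n := Nat.gcd_dvd_right g n
    have hdr : Nat.gcd g n ∣ r := by
      have : Nat.gcd g n ∣ 3 * g := hd1.mul_left 3
      have : Nat.gcd g n ∣ n - 3 * g := Nat.dvd_sub hd2 this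
      simpa [show n - 3 * g = r by omega] using this
    rcases hr12 with h | h
    · rw [h] at hdr; exact Nat.eq_one_of_dvd_one hdr
    · rw [h] at hdr
      rcases (Nat.dvd_prime Nat.prime_two).mp hdr with h' | h'
      · exact h'
      · exact absurd (h' ▸ hd2) h2
  refine ⟨?_, g, hcop, hsum⟩
  -- seqIndex = 1
  have h1mem : 1 ∈ {m : ℕ | ∃ g, g < n ∧ Nat.Coprime g n ∧
      normSum n g 1 (n - 3) (n - 2) 4 = m * n} := by
    exact ⟨g, hgn, hcop, by simpa [normSum, one_mul] using hsum⟩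
  have hle : seqIndex n 1 (n - 3) (n - 2) 4 ≤ 1 := Nat.sInf_le h1mem
  have hge : 1 ≤ seqIndex n 1 (n - 3) (n - 2) 4 := by
    apply le_csInf ⟨1, h1mem⟩
    rintro m ⟨g', hg'n, hcop', hns⟩
    by_contra hm
    have hm0 : m = 0 := by omega
    subst hm0
    simp only [zero_mul] at hns
    unfold normSum at hns
    have : (1 * g') % n = 0 := by omega
    rw [one_mul, Nat.mod_eq_of_lt hg'n] at this
    subst this
    have := Nat.coprime_zero_left n |>.mp hcop'
    omega
  omega
end

section
/- Let n be coprime to 6 and S = (x1)(x2)(x3)(x4) a minimal zero-sum sequence over Z/n with 1 ≤ xi < n, x1 = 1, gcd(xi,n) = 1 for all i, and either x3 = x2 + 1 or x2 = n − 2. Then ind(S) = 1. -/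
/-- helper: (a * (b % n)) % n = (a * b) % n -/
private lemma mul_mod_right' (a b n : ℕ) : (a * (b % n)) % n = (a * b) % n := by
  conv_rhs => rw [Nat.mul_mod]
  rw [Nat.mul_mod, Nat.mod_mod_of_dvd _ dvd_rfl]

private lemma coprime_mod' {a n : ℕ} (h : Nat.Coprime a n) : Nat.Coprime (a % n) n := by
  have : Nat.gcd n a = Nat.gcd (a % n) n := Nat.gcd_rec n a
  have h2 : Nat.gcd (a % n) n = 1 := by rw [← this]; exact Nat.coprime_comm.mp h
  exact h2

private lemma eq_of_dvd' (n s : ℕ) (h : n ∣ s) (h1 : 0 < s) (h2 : s < 2 * n) : s = n := by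
  obtain ⟨k, rfl⟩ := h
  match k with
  | 0 => simp at h1
  | 1 => simp
  | (k + 2) =>
    exfalso
    have : 2 * n ≤ n * (k + 2) := by nlinarith
    exact absurd h2 (not_lt.mpr this)

/-- There is a 3-smooth number in (A, 4A/3] for A ≥ 6. -/
private lemma smooth_exists : ∀ A : ℕ, 6 ≤ A →
    ∃ s : ℕ, (∃ a b : ℕ, s = 2 ^ a * 3 ^ b) ∧ A < s ∧ 3 * s ≤ 4 * A := by
  intro A
  induction A using Nat.strong_induction_on with
  | _ A ih =>
    intro hA
    by_cases h12 : A < 12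
    · interval_cases A
      · exact ⟨8, ⟨3, 0, by norm_num⟩, by norm_num, by norm_num⟩
      · exact ⟨8, ⟨3, 0, by norm_num⟩, by norm_num, by norm_num⟩
      · exact ⟨9, ⟨0, 2, by norm_num⟩, by norm_num, by norm_num⟩
      · exact ⟨12, ⟨2, 1, by norm_num⟩, by norm_num, by norm_num⟩
      · exact ⟨12, ⟨2, 1, by norm_num⟩, by norm_num, by norm_num⟩
      · exact ⟨12, ⟨2, 1, by norm_num⟩, by norm_num, by norm_num⟩
    · obtain ⟨s, ⟨a, b, rfl⟩, hs1, hs2⟩ := ih (A / 2) (by omega) (by omega)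
      exact ⟨2 * (2 ^ a * 3 ^ b), ⟨a + 1, b, by ring⟩, by omega, by omega⟩

private lemma smooth_coprime {n : ℕ} (h2 : ¬ 2 ∣ n) (h3 : ¬ 3 ∣ n) (a b : ℕ) :
    Nat.Coprime (2 ^ a * 3 ^ b) n := by
  have c2 : Nat.Coprime 2 n := (Nat.Prime.coprime_iff_not_dvd Nat.prime_two).mpr h2
  have c3 : Nat.Coprime 3 n := (Nat.Prime.coprime_iff_not_dvd Nat.prime_three).mpr h3
  exact Nat.Coprime.mul (c2.pow_left a) (c3.pow_left b)

/-- key existence of a coprime g in the interval (n/(2z), n/(z+1)) -/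
private lemma Sprime (n z : ℕ) (h2 : ¬ 2 ∣ n) (h3 : ¬ 3 ∣ n) (hz : 2 ≤ z) (hzn : 4 * z < n) :
    ∃ g, Nat.Coprime g n ∧ n < 2 * (g * z) ∧ g * (z + 1) < n := by
  have hz0 : 0 < 2 * z := by omega
  obtain ⟨A, m, hm, hn_eq⟩ : ∃ A m, m < 2 * z ∧ n = 2 * z * A + m :=
    ⟨n / (2 * z), n % (2 * z), Nat.mod_lt _ hz0, (Nat.div_add_mod n (2 * z)).symm⟩
  have hm1 : 1 ≤ m := by
    rcases Nat.eq_zero_or_pos m with hm0 | h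
    · exfalso; exact h2 ⟨z * A, by rw [hn_eq, hm0]; ring⟩
    · exact h
  by_cases hA6 : 6 ≤ A
  · obtain ⟨s, ⟨a, b, rfl⟩, hs1, hs2⟩ := smooth_exists A hA6
    set s := 2 ^ a * 3 ^ b
    refine ⟨s, smooth_coprime h2 h3 a b, ?_, ?_⟩
    · calc n = 2 * z * A + m := hn_eq
        _ < 2 * z * A + 2 * z := by omega
        _ = 2 * z * (A + 1) := by ring
        _ ≤ 2 * z * s := Nat.mul_le_mul_left _ (by omega)
        _ = 2 * (s * z) := by ring
    · have key : 3 * (s * (z + 1)) < 3 * n := by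
        calc 3 * (s * (z + 1)) = (3 * s) * (z + 1) := by ring
          _ ≤ (4 * A) * (z + 1) := Nat.mul_le_mul_right _ hs2
          _ = 4 * A * z + 4 * A := by ring
          _ < 3 * n := by nlinarith
      omega
  · -- A ≤ 5; also A ≥ 2 since 4z < n = 2zA + m < 2zA + 2z
    have hA2 : 2 ≤ A := by
      by_contra hc
      push_neg at hc
      interval_cases A <;> omega
    push_neg at hA6
    interval_cases A
    · -- A = 2 : g = 3
      refine ⟨3, (Nat.Prime.coprime_iff_not_dvd Nat.prime_three).mpr h3, by omega, ?_⟩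
      rcases Nat.lt_or_ge z 4 with h | h
      · interval_cases z <;> omega
      · omega
    · -- A = 3 : g = 4
      refine ⟨4, smooth_coprime h2 h3 2 0, by omega, by omega⟩
    · -- A = 4
      by_cases hz2 : z = 2
      · subst hz2
        have : n = 17 ∨ n = 19 := by omega
        rcases this with rfl | rfl
        · exact ⟨5, by decide, by omega, by omega⟩
        · exact ⟨6, smooth_coprime h2 h3 1 1, by omega, by omega⟩
      · refine ⟨6, smooth_coprime h2 h3 1 1, by omega, by omega⟩
    · -- A = 5 : g = 6
      refine ⟨6, smooth_coprime h2 h3 1 1, by omega, by omega⟩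

/-- Main combinatorial lemma: for y coprime to n, 2 ≤ y ≤ n-2, 2y ≠ n+1,
there is a coprime g with g < (g*y) % n < n/2. -/
private lemma keyL (n y : ℕ) (h2 : ¬ 2 ∣ n) (h3 : ¬ 3 ∣ n) (hy : Nat.Coprime y n)
    (hy2 : 2 ≤ y) (hyn : y + 2 ≤ n) (hbad : 2 * y ≠ n + 1) :
    ∃ g, 0 < g ∧ Nat.Coprime g n ∧ g < (g * y) % n ∧ 2 * ((g * y) % n) < n := by
  rcases lt_trichotomy (2 * y) n with h | h | h
  · refine ⟨1, one_pos, Nat.coprime_one_left n, ?_, ?_⟩ <;>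
      rw [one_mul, Nat.mod_eq_of_lt (by omega)] <;> omega
  · exact absurd ⟨y, by omega⟩ h2
  · -- 2y > n
    have hr3 : 3 ≤ 2 * y - n := by omega
    have h2y : (2 * y) % n = 2 * y - n := by
      have e : 2 * y = n * 1 + (2 * y - n) := by omega
      conv_lhs => rw [e]
      rw [Nat.mul_add_mod, Nat.mod_eq_of_lt (by omega)]
    rcases lt_trichotomy (2 * (2 * y - n)) n with hr | hr | hr
    · exact ⟨2, two_pos, (Nat.Prime.coprime_iff_not_dvd Nat.prime_two).mpr h2,
        by rw [h2y]; omega, by rw [h2y]; omega⟩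
    · exact absurd ⟨2 * y - n, by omega⟩ h2
    · set z := n - y with hzdef
      have hz2 : 2 ≤ z := by omega
      have hz4 : 4 * z < n := by omega
      obtain ⟨g, hgc, hg1, hg2⟩ := Sprime n z h2 h3 hz2 hz4
      have hg0 : 0 < g := by
        rcases Nat.eq_zero_or_pos g with rfl | h
        · simp at hg1
        · exact h
      obtain ⟨g', rfl⟩ : ∃ g', g = g' + 1 := ⟨g - 1, by omega⟩
      have hgz : (g' + 1) * z < n := by
        have : (g' + 1) * z ≤ (g' + 1) * (z + 1) := Nat.mul_le_mul_left _ (by omega)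
        omega
      have hzz : (g' + 1) * (z + 1) = (g' + 1) * z + (g' + 1) := by ring
      have hmod : ((g' + 1) * y) % n = n - (g' + 1) * z := by
        have hyz : y = n - z := by omega
        have e : (g' + 1) * y = n * g' + (n - (g' + 1) * z) := by
          rw [hyz, Nat.mul_sub]
          have e1 : (g' + 1) * n = n * g' + n := by ring
          omega
        rw [e, Nat.mul_add_mod, Nat.mod_eq_of_lt (by omega)]
      have h2g : 2 * (g' + 1) * z = 2 * ((g' + 1) * z) := by ring
      refine ⟨g' + 1, by omega, hgc, ?_, ?_⟩ <;> rw [hmod] <;> omega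

private lemma sum_res (n g x1 x2 x3 x4 : ℕ) (h : (x1 + x2 + x3 + x4) % n = 0) :
    (x1 * g % n + x2 * g % n + x3 * g % n + x4 * g % n) % n = 0 := by
  have d : n ∣ (x1 + x2 + x3 + x4) := Nat.dvd_of_mod_eq_zero h
  have d2 : n ∣ (x1 * g + x2 * g + x3 * g + x4 * g) := by
    have e : x1 * g + x2 * g + x3 * g + x4 * g = (x1 + x2 + x3 + x4) * g := by ring
    rw [e]; exact d.mul_right g
  have m : (x1 * g % n + x2 * g % n + x3 * g % n + x4 * g % n) ≡ 0 [MOD n] :=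
    ((((Nat.mod_modEq _ _).add (Nat.mod_modEq _ _)).add (Nat.mod_modEq _ _)).add
      (Nat.mod_modEq _ _)).trans ((Nat.modEq_zero_iff_dvd).mpr d2)
  simpa [Nat.ModEq] using m

theorem stmt_17 (n x1 x2 x3 x4 : ℕ) (hn : 0 < n) (h6 : Nat.Coprime n 6)
    (hS : IsMinZS4 n x1 x2 x3 x4) (h1 : x1 = 1)
    (hc1 : Nat.Coprime x1 n) (hc2 : Nat.Coprime x2 n)
    (hc3 : Nat.Coprime x3 n) (hc4 : Nat.Coprime x4 n)
    (hsing : x3 = x2 + 1 ∨ x2 = n - 2) :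
    seqIndex n x1 x2 x3 x4 = 1 := by
  subst h1
  obtain ⟨⟨hx11, hx12⟩, ⟨hx21, hx22⟩, ⟨hx31, hx32⟩, ⟨hx41, hx42⟩, hsum,
    h12, h13, h14, h23, h24, h34, h123, h124, h134, h234⟩ := hS
  have h2n : ¬ 2 ∣ n := by
    intro hd
    have := Nat.dvd_gcd hd (by norm_num : (2:ℕ) ∣ 6)
    rw [h6] at this; omega
  have h3n : ¬ 3 ∣ n := by
    intro hd
    have := Nat.dvd_gcd hd (by norm_num : (3:ℕ) ∣ 6)
    rw [h6] at this; omega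
  have hn5 : 5 ≤ n := by omega
  suffices hex : ∃ G, G < n ∧ Nat.Coprime G n ∧ normSum n G 1 x2 x3 x4 = n by
    obtain ⟨G, hG1, hG2, hG3⟩ := hex
    have hmem : (1 : ℕ) ∈ {m : ℕ | ∃ g, g < n ∧ Nat.Coprime g n ∧ normSum n g 1 x2 x3 x4 = m * n} :=
      ⟨G, hG1, hG2, by rw [one_mul]; exact hG3⟩
    unfold seqIndex
    refine le_antisymm (Nat.sInf_le hmem) ?_
    rcases Nat.eq_zero_or_pos (sInf {m : ℕ | ∃ g, g < n ∧ Nat.Coprime g n ∧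
        normSum n g 1 x2 x3 x4 = m * n}) with h0 | h1
    · exfalso
      rcases Nat.sInf_eq_zero.mp h0 with hmem0 | hempty
      · obtain ⟨g, hg, hgc, hns⟩ := hmem0
        unfold normSum at hns
        have hg0 : (1 * g) % n = 0 := by omega
        rw [one_mul, Nat.mod_eq_of_lt hg] at hg0
        subst hg0
        have := Nat.coprime_zero_left n |>.mp hgc
        omega
      · rw [Set.eq_empty_iff_forall_notMem] at hempty
        exact hempty 1 hmem
    · omega
  -- Now produce the generator G in each singular case.
  rcases hsing with hB | hA
  · -- Case B : x3 = x2 + 1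
    have hy2 : 2 ≤ x3 := by omega
    have hyn : x3 + 2 ≤ n := by
      by_contra hcon
      push_neg at hcon
      apply h13
      have e : 1 + x3 = n := by omega
      rw [e, Nat.mod_self]
    have hbad : 2 * x3 ≠ n + 1 := by
      intro hb
      apply h14
      have e2 : 1 + x2 + x3 + x4 = n + (1 + x4) := by omega
      rw [e2, Nat.add_mod_left] at hsum
      exact hsum
    obtain ⟨g, hg0, hgc, hglt, hg2v⟩ := keyL n x3 h2n h3n hc3 hy2 hyn hbad
    have hvn : (g * x3) % n < n := Nat.mod_lt _ (by omega)
    have hgn : g < n := lt_trans hglt hvn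
    have hu : (g * x2) % n = (g * x3) % n - g := by
      have hun : (g * x2) % n < n := Nat.mod_lt _ (by omega)
      have e : g * x3 = g * x2 + g := by rw [hB]; ring
      have e2 : (g * x3) % n = ((g * x2) % n + g) % n := by
        conv_lhs => rw [e]
        rw [Nat.add_mod, Nat.mod_eq_of_lt hgn]
      rcases Nat.lt_or_ge ((g * x2) % n + g) n with hlt | hge
      · rw [Nat.mod_eq_of_lt hlt] at e2; omega
      · exfalso
        have e3 : (g * x2) % n + g = n * 1 + ((g * x2) % n + g - n) := by omega
        have e4 : (g * x2) % n + g - n < n := by omega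
        rw [e3, Nat.mul_add_mod, Nat.mod_eq_of_lt e4] at e2
        omega
    refine ⟨g, hgn, hgc, ?_⟩
    have hdvd : n ∣ normSum n g 1 x2 x3 x4 :=
      Nat.dvd_of_mod_eq_zero (sum_res n g 1 x2 x3 x4 hsum)
    apply eq_of_dvd' n _ hdvd
    · unfold normSum
      rw [one_mul, Nat.mod_eq_of_lt hgn]
      omega
    · unfold normSum
      have hr4 : (x4 * g) % n < n := Nat.mod_lt _ (by omega)
      rw [one_mul, Nat.mod_eq_of_lt hgn, mul_comm x2 g, mul_comm x3 g]
      omega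
  · -- Case A : x2 = n - 2
    have hx3ne1 : x3 ≠ 1 := by
      intro he
      apply h123
      have e : 1 + x2 + x3 = n := by omega
      rw [e, Nat.mod_self]
    have hx3ne2 : x3 ≠ 2 := by
      intro he
      apply h23
      have e : x2 + x3 = n := by omega
      rw [e, Nat.mod_self]
    have hx3nen1 : x3 ≠ n - 1 := by
      intro he
      apply h13
      have e : 1 + x3 = n := by omega
      rw [e, Nat.mod_self]
    obtain ⟨y0, -, hy0⟩ := Nat.exists_mul_mod_eq_one_of_coprime hc3 (by omega : 1 < n)
    set y := y0 % n with hydef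
    have hyy : (x3 * y) % n = 1 := by
      rw [hydef, mul_mod_right', hy0]
    have hyltn : y < n := Nat.mod_lt _ (by omega)
    have hycop : Nat.Coprime y n := by
      have h' : Nat.gcd ((x3 * y) % n) n = 1 := by rw [hyy]; exact Nat.gcd_one_left n
      have h'' : Nat.Coprime (x3 * y) n := by
        have := Nat.gcd_rec n (x3 * y)
        exact Nat.coprime_comm.mp (by rw [Nat.Coprime, this, h'])
      exact Nat.Coprime.coprime_dvd_left (dvd_mul_left y x3) h''
    have hy2 : 2 ≤ y := by
      rcases Nat.lt_or_ge y 2 with h | h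
      · exfalso
        interval_cases y
        · simp at hyy
        · rw [mul_one, Nat.mod_eq_of_lt hx32] at hyy; omega
      · exact h
    have hyn : y + 2 ≤ n := by
      by_contra hcon
      push_neg at hcon
      have hey : y = n - 1 := by omega
      have e : x3 * y = n * (x3 - 1) + (n - x3) := by
        rw [hey, Nat.mul_sub, Nat.mul_sub, mul_one]
        have h1 : n ≤ x3 * n := Nat.le_mul_of_pos_left n (by omega)
        have h2 : x3 * n = n * x3 := by ring
        omega
      rw [e, Nat.mul_add_mod, Nat.mod_eq_of_lt (by omega)] at hyy
      omega
    have hbad : 2 * y ≠ n + 1 := by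
      intro hb
      have e : x3 * (2 * y) = n * x3 + x3 := by rw [hb]; ring
      have lhs : (x3 * (2 * y)) % n = 2 := by
        have e2 : x3 * (2 * y) = 2 * (x3 * y) := by ring
        rw [e2, Nat.mul_mod, hyy, Nat.mod_eq_of_lt (show 2 < n by omega)]
        simp [Nat.mod_eq_of_lt (show 2 < n by omega)]
      rw [e, Nat.mul_add_mod, Nat.mod_eq_of_lt hx32] at lhs
      omega
    obtain ⟨g, hg0, hgc, hglt, hg2v⟩ := keyL n y h2n h3n hycop hy2 hyn hbad
    set G := (g * y) % n with hGdef
    have hGn : G < n := Nat.mod_lt _ (by omega)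
    have hgn : g < n := lt_trans hglt hGn
    have hGcop : Nat.Coprime G n := by
      have h' : Nat.Coprime (g * y) n := Nat.Coprime.mul hgc hycop
      have h'' : Nat.gcd n (g * y) = 1 := Nat.coprime_comm.mp h'
      rw [Nat.Coprime, hGdef, ← Nat.gcd_rec]
      exact h''
    have hx3G : (x3 * G) % n = g := by
      rw [hGdef, mul_mod_right']
      have e : x3 * (g * y) = g * (x3 * y) := by ring
      rw [e, ← mul_mod_right' g (x3 * y) n, hyy, mul_one, Nat.mod_eq_of_lt hgn]
    have hr2 : (x2 * G) % n = n - 2 * G := by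
      have e : x2 * G = n * (G - 1) + (n - 2 * G) := by
        rw [hA, Nat.sub_mul, Nat.mul_sub]
        have h1 : n * 1 ≤ n * G := Nat.mul_le_mul_left n (by omega)
        omega
      rw [e, Nat.mul_add_mod, Nat.mod_eq_of_lt (by omega)]
    refine ⟨G, hGn, hGcop, ?_⟩
    have hdvd : n ∣ normSum n G 1 x2 x3 x4 :=
      Nat.dvd_of_mod_eq_zero (sum_res n G 1 x2 x3 x4 hsum)
    apply eq_of_dvd' n _ hdvd
    · unfold normSum
      rw [one_mul, Nat.mod_eq_of_lt hGn]
      omega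
    · unfold normSum
      have hr4 : (x4 * G) % n < n := Nat.mod_lt _ (by omega)
      rw [one_mul, Nat.mod_eq_of_lt hGn, hr2, hx3G]
      omega
end
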